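/- arXiv:2011.02015 — 4 statements merged into one kernel-verified Lean document; each statement's English description precedes it below -/
import Mathlib

section
/- Let G be a finite simple graph and let m be a matching on its face poset F(G). Then the oriented cycles induced by m are pairwise vertex-disjoint; moreover, for each induced oriented cycle, the set of edges of G whose corresponding vertices of F(G) lie on that cycle forms a cycle in G, and the cycles of G obtained this way from the distinct induced oriented cycles are pairwise vertex-disjoint. -/
/-- The arc relation of the face poset of a finite abstract simplicial complex `X`
(given as a finite family of finite faces): an arc from `σ` down to `τ` whenever
`τ` is a codimension-one face of `σ`. -/
def FaceArc {V : Type*} (X : Finset (Finset V)) (σ τ : Finset V) : Prop :=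
  σ ∈ X ∧ τ ∈ X ∧ τ ⊂ σ ∧ τ.card + 1 = σ.card

/-- The arc relation of the face poset of a simple graph `G`, regarded as a
1-dimensional simplicial complex: an arc from each edge-face `{u, v}` down to
each of its endpoint vertex-faces. -/
def GraphArc {V : Type*} [DecidableEq V] (G : SimpleGraph V) (σ τ : Finset V) : Prop :=
  ∃ u v : V, G.Adj u v ∧ σ = {u, v} ∧ (τ = {u} ∨ τ = {v})

/-- A matching on the digraph with arc relation `A`: a finite set of arcs,
no two of which share an endpoint. -/
def IsMatching {α : Type*} (A : α → α → Prop) (m : Finset (α × α)) : Prop :=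
  (∀ p ∈ m, A p.1 p.2) ∧
    ∀ p ∈ m, ∀ q ∈ m, p ≠ q →
      p.1 ≠ q.1 ∧ p.1 ≠ q.2 ∧ p.2 ≠ q.1 ∧ p.2 ≠ q.2

/-- The arc relation of the digraph obtained from the digraph with arc relation `A`
by reversing the arcs belonging to `m`. -/
def MStep {α : Type*} (A : α → α → Prop) (m : Finset (α × α)) (a b : α) : Prop :=
  (A a b ∧ (a, b) ∉ m) ∨ (A b a ∧ (b, a) ∈ m)

/-- `IsCycleList R l` says the nonempty list `l` of pairwise distinct vertices is a
directed cycle of the digraph with arc relation `R` (consecutive steps, closing up). -/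
def IsCycleList {α : Type*} (R : α → α → Prop) : List α → Prop
  | [] => False
  | a :: l => (a :: l).Nodup ∧ List.Chain R a (l ++ [a])

/-- The set of oriented cycles induced by the matching `m` on the digraph with arc
relation `A` (as lists of vertices; rotated lists represent the same cycle). -/
def cyclesOf {α : Type*} (A : α → α → Prop) (m : Finset (α × α)) : Set (List α) :=
  {l | IsCycleList (MStep A m) l}

/-- `numCycles A m` is `J(m)`, the number of oriented cycles induced by `m`
(cycle lists counted up to rotation). -/
noncomputable def numCycles {α : Type*} (A : α → α → Prop) (m : Finset (α × α)) : ℕ :=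
  (Quotient.mk (List.IsRotated.setoid α) '' cyclesOf A m).ncard

section Aux

variable {α : Type*} {R : α → α → Prop}

/-- one-step rotation of a cyclic chain -/
lemma isCycleList_rotate_one {l : List α} (h : IsCycleList R l) :
    IsCycleList R (l.rotate 1) := by
  cases l with
  | nil => simp [IsCycleList] at h
  | cons a t =>
      rw [show (1 : ℕ) = 0 + 1 from rfl, List.rotate_cons_succ, List.rotate_zero]
      cases t with
      | nil => simpa using h
      | cons c t' =>
          obtain ⟨hnd, hch⟩ := h
          rcases List.chain_cons.1 hch with ⟨hac, hct⟩
          refine ⟨?_, ?_⟩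
          · have : (a :: c :: t').Perm ((c :: t') ++ [a]) :=
              (List.perm_append_singleton a (c :: t')).symm
            exact this.nodup hnd
          · show List.Chain R c ((t' ++ [a]) ++ [c])
            have : t' ++ [a] ++ [c] = t' ++ a :: [c] := by simp
            rw [this]; show List.IsChain R (c :: (t' ++ a :: [c])); rw [List.isChain_cons_split]
            exact ⟨hct, List.chain_cons.2 ⟨hac, List.Chain.nil⟩⟩

lemma isCycleList_of_isRotated {l l' : List α} (h : IsCycleList R l)
    (hr : l.IsRotated l') : IsCycleList R l' := by
  obtain ⟨n, rfl⟩ := hr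
  induction n with
  | zero => simpa using h
  | succ k ih =>
      have : l.rotate (k + 1) = (l.rotate k).rotate 1 := by rw [List.rotate_rotate]
      rw [this]; exact isCycleList_rotate_one ih

/-- every member of a chain's tail has a predecessor -/
lemma chain_pred {b : α} {l : List α} (h : List.Chain R b l) :
    ∀ a ∈ l, ∃ x, R x a := by
  induction l generalizing b with
  | nil => intro a ha; simp at ha
  | cons c t ih =>
      intro a ha
      rcases List.chain_cons.1 h with ⟨hbc, hct⟩
      rcases List.mem_cons.1 ha with rfl | ha'
      · exact ⟨b, hbc⟩
      · exact ih hct a ha'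

/-- every member of a cycle has a predecessor -/
lemma cycle_mem_pred {l : List α} (h : IsCycleList R l) {a : α} (ha : a ∈ l) :
    ∃ x, R x a := by
  cases l with
  | nil => exact absurd h (by simp [IsCycleList])
  | cons b t =>
      obtain ⟨hnd, hch⟩ := h
      rcases List.mem_cons.1 ha with rfl | ha'
      · exact chain_pred hch a (by simp)
      · exact chain_pred hch a (by simp [ha'])

/-- two chains with the same head and endpoint, under determinism, are equal -/
lemma chain_unique (σ₀ : α) :
    ∀ (t₁ t₂ : List α) (σ : α), List.Chain R σ (t₁ ++ [σ₀]) →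
      List.Chain R σ (t₂ ++ [σ₀]) → σ₀ ∉ t₁ → σ₀ ∉ t₂ →
      (∀ a, (a = σ ∨ a ∈ t₁) → ∀ b c, R a b → R a c → b = c) → t₁ = t₂ := by
  intro t₁
  induction t₁ with
  | nil =>
      intro t₂ σ h₁ h₂ hn₁ hn₂ hdet
      cases t₂ with
      | nil => rfl
      | cons c₂ t₂' =>
          simp only [List.nil_append] at h₁
          rcases List.chain_cons.1 h₁ with ⟨hσσ₀, -⟩
          rcases List.chain_cons.1 h₂ with ⟨hσc₂, -⟩
          have : σ₀ = c₂ := hdet σ (Or.inl rfl) σ₀ c₂ hσσ₀ hσc₂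
          exact absurd (this ▸ List.mem_cons_self (a := c₂) (l := t₂')) hn₂
  | cons c t₁' ih =>
      intro t₂ σ h₁ h₂ hn₁ hn₂ hdet
      rcases List.chain_cons.1 h₁ with ⟨hσc, h₁'⟩
      cases t₂ with
      | nil =>
          simp only [List.nil_append] at h₂
          rcases List.chain_cons.1 h₂ with ⟨hσσ₀, -⟩
          have : c = σ₀ := hdet σ (Or.inl rfl) c σ₀ hσc hσσ₀
          exact absurd (this ▸ List.mem_cons_self (a := c) (l := t₁')) hn₁
      | cons c₂ t₂' =>
          rcases List.chain_cons.1 h₂ with ⟨hσc₂, h₂'⟩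
          have hcc : c = c₂ := hdet σ (Or.inl rfl) c c₂ hσc hσc₂
          subst hcc
          have := ih t₂' c h₁' h₂' (fun h => hn₁ (List.mem_cons_of_mem _ h))
            (fun h => hn₂ (List.mem_cons_of_mem _ h))
            (fun a ha => hdet a (by rcases ha with rfl | ha
                                    · exact Or.inr List.mem_cons_self
                                    · exact Or.inr (List.mem_cons_of_mem _ ha)))
          rw [this]

/-- two cycles sharing an element, under determinism, are rotations of each other -/
lemma cycles_rotated {l₁ l₂ : List α} (h₁ : IsCycleList R l₁) (h₂ : IsCycleList R l₂)
    (hdet : ∀ a ∈ l₁, ∀ b c, R a b → R a c → b = c)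
    {σ : α} (hσ₁ : σ ∈ l₁) (hσ₂ : σ ∈ l₂) : l₁.IsRotated l₂ := by
  obtain ⟨s₁, t₁, rfl⟩ := List.append_of_mem hσ₁
  obtain ⟨s₂, t₂, rfl⟩ := List.append_of_mem hσ₂
  have hr₁ : (s₁ ++ σ :: t₁).IsRotated (σ :: (t₁ ++ s₁)) := by
    simpa using (List.isRotated_append (l := s₁) (l' := σ :: t₁))
  have hr₂ : (s₂ ++ σ :: t₂).IsRotated (σ :: (t₂ ++ s₂)) := by
    simpa using (List.isRotated_append (l := s₂) (l' := σ :: t₂))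
  have hc₁ := isCycleList_of_isRotated h₁ hr₁
  have hc₂ := isCycleList_of_isRotated h₂ hr₂
  obtain ⟨hnd₁, hch₁⟩ := hc₁
  obtain ⟨hnd₂, hch₂⟩ := hc₂
  have hdet' : ∀ a, (a = σ ∨ a ∈ t₁ ++ s₁) → ∀ b c, R a b → R a c → b = c := by
    intro a ha
    apply hdet
    rw [hr₁.mem_iff]
    rcases ha with rfl | ha
    · exact List.mem_cons_self
    · exact List.mem_cons_of_mem _ ha
  have := chain_unique σ (t₁ ++ s₁) (t₂ ++ s₂) σ hch₁ hch₂
    ((List.nodup_cons.1 hnd₁).1) ((List.nodup_cons.1 hnd₂).1) hdet'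
  rw [this] at hr₁
  exact hr₁.trans hr₂.symm

end Aux

section Graph

variable {V : Type*} [DecidableEq V] {G : SimpleGraph V}
variable {m : Finset (Finset V × Finset V)}

lemma graphArc_cards {σ τ : Finset V} (h : GraphArc G σ τ) :
    σ.card = 2 ∧ τ.card = 1 ∧ τ ⊆ σ := by
  obtain ⟨u, v, huv, rfl, hτ⟩ := h
  have hne : u ≠ v := huv.ne
  refine ⟨by rw [Finset.card_insert_of_notMem (by simp [hne]), Finset.card_singleton], ?_, ?_⟩
  · rcases hτ with rfl | rfl <;> simp
  · rcases hτ with rfl | rfl <;> intro x hx <;> simp_all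

/-- the successor of a singleton on a cycle: a matched doubleton -/
lemma step_single {x : V} {b : Finset V}
    (h : MStep (GraphArc G) m {x} b) :
    ∃ y : V, G.Adj x y ∧ b = {x, y} ∧ (({x, y} : Finset V), ({x} : Finset V)) ∈ m := by
  rcases h with ⟨ha, -⟩ | ⟨ha, hmem⟩
  · have := (graphArc_cards ha).1
    simp at this
  · obtain ⟨u, v, huv, rfl, hx⟩ := ha
    rcases hx with hx | hx
    · have hxu : x = u := by
        have := Finset.mem_singleton.2 (rfl : u = u)
        rw [← hx] at this; exact (Finset.mem_singleton.1 this).symm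
      subst hxu
      exact ⟨v, huv, rfl, hmem⟩
    · have hxv : x = v := by
        have := Finset.mem_singleton.2 (rfl : v = v)
        rw [← hx] at this; exact (Finset.mem_singleton.1 this).symm
      subst hxv
      exact ⟨u, huv.symm, by rw [Finset.pair_comm], by rwa [Finset.pair_comm]⟩

/-- the successor of a matched doubleton: the other endpoint -/
lemma step_double {x y : V} (hxy : G.Adj x y)
    (hmem : (({x, y} : Finset V), ({x} : Finset V)) ∈ m) {c : Finset V}
    (h : MStep (GraphArc G) m {x, y} c) : c = {y} := by
  rcases h with ⟨ha, hnm⟩ | ⟨ha, -⟩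
  · obtain ⟨u, v, huv, hσ, hc⟩ := ha
    have hsub : c ⊆ ({x, y} : Finset V) := by
      rw [hσ]; rcases hc with rfl | rfl <;> intro w hw <;> simp_all
    obtain ⟨w, rfl⟩ : ∃ w, c = {w} := by
      rcases hc with rfl | rfl <;> exact ⟨_, rfl⟩
    have hw : w ∈ ({x, y} : Finset V) := hsub (Finset.mem_singleton_self w)
    rcases Finset.mem_insert.1 hw with rfl | hw'
    · exact absurd hmem hnm
    · rw [Finset.mem_singleton.1 hw']
  · have := (graphArc_cards ha).2.1
    rw [Finset.card_insert_of_notMem (by simp [hxy.ne]), Finset.card_singleton] at this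
    omega

/-- determinism: any face with an incoming arc has at most one outgoing arc -/
lemma mstep_det (hm : IsMatching (GraphArc G) m) {σ : Finset V}
    (hin : ∃ a, MStep (GraphArc G) m a σ) {b c : Finset V}
    (hb : MStep (GraphArc G) m σ b) (hc : MStep (GraphArc G) m σ c) : b = c := by
  rcases hb with ⟨hab, hnmb⟩ | ⟨hba, hmb⟩
  · have hσ2 : σ.card = 2 := (graphArc_cards hab).1
    obtain ⟨a, ha⟩ := hin
    rcases ha with ⟨haσ, -⟩ | ⟨hσa, hma⟩
    · have := (graphArc_cards haσ).2.1; omega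
    · rcases hc with ⟨hac, hnmc⟩ | ⟨hca, hmc⟩
      · obtain ⟨wa, hwa, rfl⟩ : ∃ w, w ∈ σ ∧ a = {w} := by
          obtain ⟨u, v, huv, h1, h2⟩ := hσa
          rcases h2 with rfl | rfl
          · exact ⟨u, by rw [h1]; simp, rfl⟩
          · exact ⟨v, by rw [h1]; simp, rfl⟩
        obtain ⟨wb, hwb, rfl⟩ : ∃ w, w ∈ σ ∧ b = {w} := by
          obtain ⟨u, v, huv, h1, h2⟩ := hab
          rcases h2 with rfl | rfl
          · exact ⟨u, by rw [h1]; simp, rfl⟩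
          · exact ⟨v, by rw [h1]; simp, rfl⟩
        obtain ⟨wc, hwc, rfl⟩ : ∃ w, w ∈ σ ∧ c = {w} := by
          obtain ⟨u, v, huv, h1, h2⟩ := hac
          rcases h2 with rfl | rfl
          · exact ⟨u, by rw [h1]; simp, rfl⟩
          · exact ⟨v, by rw [h1]; simp, rfl⟩
        by_contra hne
        have hwbc : wb ≠ wc := by simpa using hne
        have hwa' : wa = wb ∨ wa = wc := by
          by_contra hcon
          push_neg at hcon
          have hsub : ({wa, wb, wc} : Finset V) ⊆ σ := by
            intro t ht; simp at ht; rcases ht with rfl | rfl | rfl <;> assumption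
          have h3 : ({wa, wb, wc} : Finset V).card = 3 := by
            rw [Finset.card_insert_of_notMem (by simp [hcon.1, hcon.2]),
              Finset.card_insert_of_notMem (by simp [hwbc]), Finset.card_singleton]
          have := Finset.card_le_card hsub
          omega
        rcases hwa' with rfl | rfl
        · exact hnmb hma
        · exact hnmc hma
      · have := (graphArc_cards hca).2.1; omega
  · rcases hc with ⟨hac, hnmc⟩ | ⟨hca, hmc⟩
    · have h1 := (graphArc_cards hba).2.1
      have h2 := (graphArc_cards hac).1
      omega
    · by_contra hne
      have := (hm.2 (b, σ) hmb (c, σ) hmc (by simp [hne])).2.2.2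
      exact this rfl

/-- the list of faces visited by a walk (excluding the final vertex-face) -/
def faceList : ∀ {u z : V}, G.Walk u z → List (Finset V)
  | _, _, SimpleGraph.Walk.nil => []
  | u, _, SimpleGraph.Walk.cons (v := v) _ p =>
      ({u} : Finset V) :: ({u, v} : Finset V) :: faceList p

def sym2ToFinset : Sym2 V → Finset V :=
  Sym2.lift ⟨fun a b => ({a, b} : Finset V), fun a b => Finset.pair_comm a b⟩

lemma edges_map_sublist {u z : V} (w : G.Walk u z) :
    (w.edges.map sym2ToFinset).Sublist (faceList w) := by
  induction w with
  | nil => simp [faceList]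
  | cons h p ih =>
      rename_i a b c
      show (sym2ToFinset s(a, b) :: p.edges.map sym2ToFinset).Sublist
        (({a} : Finset V) :: ({a, b} : Finset V) :: faceList p)
      have e : sym2ToFinset s(a, b) = ({a, b} : Finset V) := rfl
      rw [e]
      exact (ih.cons₂ _).cons _

lemma support_dropLast_sublist {u z : V} (w : G.Walk u z) :
    (w.support.dropLast.map (fun v => ({v} : Finset V))).Sublist (faceList w) := by
  induction w with
  | nil => simp [faceList]
  | cons h p ih =>
      rename_i a b c
      simp only [SimpleGraph.Walk.support_cons, faceList]
      have hne : p.support ≠ [] := p.support_ne_nil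
      rw [List.dropLast_cons_of_ne_nil hne, List.map_cons]
      exact (ih.cons _).cons_cons _

lemma pair_eq_sym2 {a b u v : V} (hab : a ≠ b) (h : ({a, b} : Finset V) = {u, v}) :
    s(a, b) = s(u, v) := by
  have ha : a ∈ ({u, v} : Finset V) := h ▸ (by simp)
  have hb : b ∈ ({u, v} : Finset V) := h ▸ (by simp)
  simp only [Finset.mem_insert, Finset.mem_singleton] at ha hb
  rcases ha with rfl | rfl <;> rcases hb with rfl | rfl
  · exact absurd rfl hab
  · rfl
  · exact Sym2.eq_swap
  · exact absurd rfl hab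

lemma mem_faceList_pair {u z : V} (w : G.Walk u z) {a b : V} (hab : a ≠ b) :
    (({a, b} : Finset V) ∈ faceList w) ↔ s(a, b) ∈ w.edges := by
  induction w with
  | nil => simp [faceList]
  | cons h p ih =>
      rename_i x y c
      simp only [faceList, SimpleGraph.Walk.edges_cons, List.mem_cons]
      constructor
      · rintro (h1 | h1 | h1)
        · exfalso
          have : ({a, b} : Finset V).card = 2 := by
            rw [Finset.card_insert_of_notMem (by simp [hab]), Finset.card_singleton]
          rw [h1] at this; simp at this
        · exact Or.inl (pair_eq_sym2 hab h1)
        · exact Or.inr (ih.1 h1)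
      · rintro (h1 | h1)
        · refine Or.inr (Or.inl ?_)
          rw [Sym2.eq_iff] at h1
          rcases h1 with ⟨rfl, rfl⟩ | ⟨rfl, rfl⟩
          · rfl
          · exact Finset.pair_comm a b
        · exact Or.inr (Or.inr (ih.2 h1))

/-- main construction: a cyclic chain starting at a singleton yields a walk -/
lemma walk_of_chain :
    ∀ (n : ℕ) (l : List (Finset V)) (x z : V), l.length = n →
      List.Chain (MStep (GraphArc G) m) {x} (l ++ [({z} : Finset V)]) →
      ∃ w : G.Walk x z, ({x} : Finset V) :: l = faceList w := by
  intro n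
  induction n using Nat.strong_induction_on with
  | _ n ih =>
    intro l x z hlen hch
    match l with
    | [] =>
        simp only [List.nil_append] at hch
        rcases List.chain_cons.1 hch with ⟨hstep, -⟩
        obtain ⟨y, hxy, hb, -⟩ := step_single hstep
        exfalso
        have : ({z} : Finset V).card = 1 := Finset.card_singleton z
        rw [hb, Finset.card_insert_of_notMem (by simp [hxy.ne]),
          Finset.card_singleton] at this
        omega
    | [d] =>
        simp only [List.cons_append, List.nil_append] at hch
        rcases List.chain_cons.1 hch with ⟨h1, h2⟩
        rcases List.chain_cons.1 h2 with ⟨h3, -⟩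
        obtain ⟨y, hxy, rfl, hmem⟩ := step_single h1
        have hz : ({z} : Finset V) = {y} := step_double hxy hmem h3
        have hzy : z = y := by
          have := Finset.mem_singleton.2 (rfl : z = z)
          rw [hz] at this; exact Finset.mem_singleton.1 this
        subst hzy
        exact ⟨SimpleGraph.Walk.cons hxy SimpleGraph.Walk.nil, by simp [faceList]⟩
    | d :: s :: l' =>
        simp only [List.cons_append] at hch
        rcases List.chain_cons.1 hch with ⟨h1, h2⟩
        rcases List.chain_cons.1 h2 with ⟨h3, h4⟩
        obtain ⟨y, hxy, rfl, hmem⟩ := step_single h1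
        have hs : s = {y} := step_double hxy hmem h3
        subst hs
        have hch' : List.Chain (MStep (GraphArc G) m) {y} (l' ++ [({z} : Finset V)]) := h4
        obtain ⟨w', hw'⟩ := ih l'.length (by simp at hlen; omega) l' y z rfl hch'
        refine ⟨SimpleGraph.Walk.cons hxy w', ?_⟩
        show _ = ({x} : Finset V) :: ({x, y} : Finset V) :: faceList w'
        rw [← hw']

end Graph

/-- for a simple graph `G`, the oriented cycles induced by a matching on
the face poset `F(G)` are pairwise vertex-disjoint; each induced oriented cycle yields
a cycle of `G` (the edges of `G` whose faces lie on it), and these cycles of `G` are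
pairwise vertex-disjoint. -/
theorem graph_cycles_vertex_disjoint {V : Type*} [Fintype V] [DecidableEq V]
    (G : SimpleGraph V)
    (m : Finset (Finset V × Finset V)) (hm : IsMatching (GraphArc G) m) :
    (∀ γ₁ ∈ cyclesOf (GraphArc G) m, ∀ γ₂ ∈ cyclesOf (GraphArc G) m,
        ¬ γ₁.IsRotated γ₂ → ∀ σ ∈ γ₁, σ ∉ γ₂) ∧
    (∀ γ ∈ cyclesOf (GraphArc G) m, ∃ (v : V) (w : G.Walk v v), w.IsCycle ∧
        ∀ x y : V, x ≠ y → (s(x, y) ∈ w.edges ↔ ({x, y} : Finset V) ∈ γ)) ∧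
    (∀ γ₁ ∈ cyclesOf (GraphArc G) m, ∀ γ₂ ∈ cyclesOf (GraphArc G) m,
        ¬ γ₁.IsRotated γ₂ →
        ∀ x : V, ({x} : Finset V) ∈ γ₁ → ({x} : Finset V) ∉ γ₂) := by
  have part1 : ∀ γ₁ ∈ cyclesOf (GraphArc G) m, ∀ γ₂ ∈ cyclesOf (GraphArc G) m,
      ¬ γ₁.IsRotated γ₂ → ∀ σ ∈ γ₁, σ ∉ γ₂ := by
    intro γ₁ h₁ γ₂ h₂ hrot σ hσ₁ hσ₂
    exact hrot (cycles_rotated h₁ h₂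
      (fun a ha b c hb hc => mstep_det hm (cycle_mem_pred h₁ ha) hb hc) hσ₁ hσ₂)
  refine ⟨part1, ?_, ?_⟩
  · intro γ hγ
    -- find a singleton in γ
    obtain ⟨x, hx⟩ : ∃ x : V, ({x} : Finset V) ∈ γ := by
      cases γ with
      | nil => exact absurd hγ (by simp [cyclesOf, IsCycleList])
      | cons a t =>
          obtain ⟨hnd, hch⟩ := hγ
          cases t with
          | nil =>
              exfalso
              rcases List.chain_cons.1 hch with ⟨hstep, -⟩
              rcases hstep with ⟨harc, -⟩ | ⟨harc, -⟩ <;>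
                · have h1 := (graphArc_cards harc).1
                  have h2 := (graphArc_cards harc).2.1
                  omega
          | cons c t' =>
              rcases List.chain_cons.1 hch with ⟨hstep, -⟩
              rcases hstep with ⟨harc, -⟩ | ⟨harc, -⟩
              · obtain ⟨u, v, -, -, hc⟩ := harc
                rcases hc with rfl | rfl
                · exact ⟨u, by simp⟩
                · exact ⟨v, by simp⟩
              · obtain ⟨u, v, -, -, hc⟩ := harc
                rcases hc with ha | ha
                · exact ⟨u, by simp [ha]⟩
                · exact ⟨v, by simp [ha]⟩
    obtain ⟨s, t, rfl⟩ := List.append_of_mem hx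
    have hr : (s ++ ({x} : Finset V) :: t).IsRotated (({x} : Finset V) :: (t ++ s)) := by
      simpa using (List.isRotated_append (l := s) (l' := ({x} : Finset V) :: t))
    have hγ' := isCycleList_of_isRotated hγ hr
    obtain ⟨hnd', hch'⟩ := hγ'
    obtain ⟨w, hfl⟩ := walk_of_chain (t ++ s).length (t ++ s) x x rfl hch'
    have hγeq : (({x} : Finset V) :: (t ++ s)) = faceList w := hfl
    refine ⟨x, w, ?_, ?_⟩
    · -- IsCycle
      have hndf : (faceList w).Nodup := hγeq ▸ hnd'
      have hnenil : w ≠ SimpleGraph.Walk.nil := by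
        intro h
        have : faceList w = [] := by rw [h]; rfl
        rw [← hγeq] at this
        simp at this
      have hedges : w.edges.Nodup :=
        List.Nodup.of_map sym2ToFinset ((edges_map_sublist w).nodup hndf)
      have hdl : w.support.dropLast.Nodup :=
        List.Nodup.of_map _ ((support_dropLast_sublist w).nodup hndf)
      have htail : w.support.tail.Nodup := by
        have hsupp : w.support = x :: w.support.tail := w.support_eq_cons
        cases htl : w.support.tail with
        | nil => simp
        | cons b t0 =>
            rw [hsupp, htl] at hdl
            rw [List.dropLast_cons_of_ne_nil (by simp)] at hdl
            have hlast : (b :: t0).getLast (by simp) = x := by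
              have h1 : w.support.getLast? = some x :=
                (List.getLast?_eq_getLast (l := w.support) (by simp)).trans
                  (congrArg some w.getLast_support)
              rw [hsupp, htl, List.getLast?_cons_cons] at h1
              have h2 := List.getLast?_eq_getLast (l := b :: t0) (by simp)
              rw [h2] at h1
              exact Option.some.inj h1
            have hrepr : b :: t0 = (b :: t0).dropLast ++ [x] := by
              conv_lhs => rw [← List.dropLast_append_getLast (l := b :: t0) (by simp)]
              rw [hlast]
            rw [hrepr]
            rcases List.nodup_cons.1 hdl with ⟨hxnot, hdl'⟩
            rw [List.nodup_append]
            refine ⟨hdl', List.nodup_singleton x, fun a ha b hb => ?_⟩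
            simp only [List.mem_singleton] at hb
            subst hb
            exact fun hab => hxnot (hab ▸ ha)
      exact ⟨⟨⟨hedges⟩, hnenil⟩, htail⟩
    · intro a b hab
      rw [← mem_faceList_pair w hab, ← hγeq, ← hr.mem_iff]
  · intro γ₁ h₁ γ₂ h₂ hrot x hx
    exact part1 γ₁ h₁ γ₂ h₂ hrot _ hx
end

section
/- Let G be a finite simple graph and let C be any finite collection of pairwise vertex-disjoint cycles in G. Then there exists a matching m on the face poset F(G) whose induced oriented cycles correspond exactly to the cycles of C: each cycle of C of length ℓ yields exactly one induced oriented cycle of length 2ℓ in F(G) passing through the vertices and edges of that cycle, and m induces no other oriented cycles. In particular, the map sending an orientation-forgetting projection of the induced oriented cycles of a matching to a collection of vertex-disjoint cycles of G is surjective. -/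
namespace MRVDC5

open SimpleGraph List

/-! ### general list-cycle lemmas -/

lemma isCycleList_rotate {α : Type*} {R : α → α → Prop} {c c' : List α}
    (h : IsCycleList R c) (hr : c ~r c') : IsCycleList R c' := by
  rcases c with _ | ⟨a, l⟩
  · exact h.elim
  rcases c' with _ | ⟨b, t⟩
  · have := hr.perm.length_eq; simp at this
  obtain ⟨hnd, hch⟩ := h
  refine ⟨(hr.perm.nodup_iff).mp hnd, ?_⟩
  have hcy : Cycle.Chain R ↑(a :: l) := (Cycle.chain_coe_cons R a l).mpr hch
  have hco : (↑(a :: l) : Cycle α) = ↑(b :: t) := Cycle.coe_eq_coe.mpr hr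
  rw [hco] at hcy
  exact (Cycle.chain_coe_cons R b t).mp hcy

lemma exists_rotate_head {α : Type*} {c : List α} {x : α} (hx : x ∈ c) :
    ∃ t, c ~r (x :: t) := by
  obtain ⟨s, t, rfl⟩ := List.append_of_mem hx
  exact ⟨t ++ s, by simpa using (List.isRotated_append : s ++ (x :: t) ~r (x :: t) ++ s)⟩

lemma exists_succ_mem {α : Type*} {R : α → α → Prop} {c : List α} {x : α}
    (h : IsCycleList R c) (hx : x ∈ c) : ∃ y ∈ c, R x y := by
  obtain ⟨t, hr⟩ := exists_rotate_head hx
  obtain ⟨hnd, hch⟩ := isCycleList_rotate h hr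
  rcases ht : t ++ [x] with _ | ⟨y, r⟩
  · simp at ht
  · rw [ht] at hch
    have hy : R x y := (List.chain_cons.mp hch).1
    have hyc : y ∈ x :: t := by
      have hym : y ∈ t ++ [x] := by rw [ht]; simp
      rcases List.mem_append.mp hym with h' | h'
      · exact List.mem_cons_of_mem _ h'
      · simp only [List.mem_singleton] at h'; simp [h']
    exact ⟨y, hr.perm.mem_iff.mpr hyc, hy⟩

lemma cycle_get {α : Type*} {R : α → α → Prop} {f : α → α}
    (hdet : ∀ x y z, R x y → R y z → z = f y)
    {a : α} {l : List α} (h : List.Chain R a (l ++ [a])) :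
    (∀ j (hj : j < (a :: l).length), (a :: l).get ⟨j, hj⟩ = f^[j] a) ∧
      f^[(a :: l).length] a = a := by
  have hch : List.Chain' R ((a :: l) ++ [a]) := h
  set g : ℕ → α := fun j => ((a :: l) ++ [a]).getD j a with hg
  have hlen : ((a :: l) ++ [a]).length = l.length + 2 := by simp
  have hgget : ∀ j (hj : j < l.length + 2), g j = ((a :: l) ++ [a]).get ⟨j, by omega⟩ := by
    intro j hj
    simp only [hg, List.get_eq_getElem]
    exact List.getD_eq_getElem _ _ (by omega)
  have step : ∀ j, j < l.length + 1 → R (g j) (g (j+1)) := by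
    intro j hj
    have hs := List.isChain_iff_getElem.mp hch j (by omega)
    rw [hgget j (by omega), hgget (j+1) (by omega)]
    exact hs
  have hget : ∀ j (hj : j < l.length + 1), g j = (a :: l).get ⟨j, by simp; omega⟩ := by
    intro j hj
    rw [hgget j (by omega)]
    simp only [List.get_eq_getElem]
    rw [List.getElem_append_left (by simp; omega)]
  have hlast : g (l.length + 1) = a := by
    rw [hgget _ (by omega)]
    simp only [List.get_eq_getElem]
    rw [List.getElem_append_right (by simp)]
    simp
  have h0 : g 0 = a := by
    rw [hgget 0 (by omega)]
    rfl
  have key : ∀ j, j ≤ l.length + 1 → g j = f^[j] a := by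
    intro j
    induction j with
    | zero => intro _; exact h0
    | succ j ih =>
      intro hj
      have hj' : j < l.length + 1 := by omega
      have hstep := step j hj'
      have hpred : ∃ p, R p (g j) := by
        rcases j with _ | m
        · refine ⟨g l.length, ?_⟩
          have hs := step l.length (by omega)
          rw [hlast] at hs
          rw [h0]
          exact hs
        · exact ⟨g m, step m (by omega)⟩
      obtain ⟨p, hp⟩ := hpred
      rw [hdet p _ _ hp hstep, ih (by omega), ← Function.iterate_succ_apply' f j a]
  refine ⟨?_, ?_⟩
  · intro j hj
    rw [← hget j (by simpa using hj)]
    exact key j (by simp at hj; omega)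
  · have hk := key (l.length + 1) le_rfl
    rw [hlast] at hk
    rw [show (a :: l).length = l.length + 1 from by simp]
    exact hk.symm

lemma cycle_len_le {α : Type*} {R : α → α → Prop} {f : α → α}
    (hdet : ∀ x y z, R x y → R y z → z = f y)
    {a : α} {l l' : List α} (h1 : IsCycleList R (a :: l)) (h2 : IsCycleList R (a :: l')) :
    (a :: l).length ≤ (a :: l').length := by
  by_contra hlt
  push_neg at hlt
  obtain ⟨hget1, _⟩ := cycle_get hdet h1.2
  obtain ⟨_, hper2⟩ := cycle_get hdet h2.2
  have hx : (a :: l).get ⟨(a :: l').length, hlt⟩ = a := by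
    rw [hget1 _ hlt, hper2]
  have h0 : (a :: l).get ⟨0, by simp⟩ = a := rfl
  have hij := h1.1.get_inj_iff.mp (hx.trans h0.symm)
  have hv := congrArg Fin.val hij
  simp at hv

lemma cycle_eq {α : Type*} {R : α → α → Prop} {f : α → α}
    (hdet : ∀ x y z, R x y → R y z → z = f y)
    {a : α} {l l' : List α} (h1 : IsCycleList R (a :: l)) (h2 : IsCycleList R (a :: l')) :
    l = l' := by
  have hlen : (a :: l).length = (a :: l').length :=
    le_antisymm (cycle_len_le hdet h1 h2) (cycle_len_le hdet h2 h1)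
  have : a :: l = a :: l' := by
    refine List.ext_get hlen ?_
    intro n hn1 hn2
    rw [(cycle_get hdet h1.2).1 n hn1, (cycle_get hdet h2.2).1 n hn2]
  injection this

/-! ### graph-specific constructions -/

variable {V : Type*} [DecidableEq V] {G : SimpleGraph V}

lemma card1_ne_pair {a b c : V} (h : b ≠ c) : ({a} : Finset V) ≠ {b, c} := by
  intro h'
  have hcard := congrArg Finset.card h'
  rw [Finset.card_singleton, Finset.card_pair h] at hcard
  omega

lemma pair_eq {a b c d : V} (h : ({a, b} : Finset V) = {c, d}) :
    (a = c ∧ b = d) ∨ (a = d ∧ b = c) := by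
  have ha : a ∈ ({c, d} : Finset V) := by rw [← h]; simp
  have hb : b ∈ ({c, d} : Finset V) := by rw [← h]; simp
  have hc : c ∈ ({a, b} : Finset V) := by rw [h]; simp
  have hd : d ∈ ({a, b} : Finset V) := by rw [h]; simp
  simp only [Finset.mem_insert, Finset.mem_singleton] at ha hb hc hd
  rcases ha with rfl | rfl
  · rcases hb with rfl | rfl
    · rcases hd with rfl | rfl
      · exact Or.inl ⟨rfl, rfl⟩
      · exact Or.inl ⟨rfl, rfl⟩
    · exact Or.inl ⟨rfl, rfl⟩
  · rcases hb with rfl | rfl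
    · exact Or.inr ⟨rfl, rfl⟩
    · rcases hc with rfl | rfl
      · exact Or.inl ⟨rfl, rfl⟩
      · exact Or.inr ⟨rfl, rfl⟩

def interleave : List G.Dart → List (Finset V)
  | [] => []
  | d :: rest => {d.fst} :: {d.fst, d.snd} :: interleave rest

lemma mem_interleave {ds : List G.Dart} {σ : Finset V} :
    σ ∈ interleave ds ↔ ∃ d ∈ ds, σ = {d.fst} ∨ σ = {d.fst, d.snd} := by
  induction ds with
  | nil => simp [interleave]
  | cons d rest ih =>
    simp only [interleave, List.mem_cons, ih]
    constructor
    · rintro (rfl | rfl | ⟨d', hd', h'⟩)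
      · exact ⟨d, by simp, Or.inl rfl⟩
      · exact ⟨d, by simp, Or.inr rfl⟩
      · exact ⟨d', by simp [hd'], h'⟩
    · rintro ⟨d', hd', h'⟩
      rcases hd' with rfl | hd'
      · rcases h' with rfl | rfl
        · exact Or.inl rfl
        · exact Or.inr (Or.inl rfl)
      · exact Or.inr (Or.inr ⟨d', hd', h'⟩)

lemma length_interleave (ds : List G.Dart) : (interleave ds).length = 2 * ds.length := by
  induction ds with
  | nil => simp [interleave]
  | cons d rest ih => simp [interleave, ih]; omega

lemma dropLast_support_nodup {u : V} {p : G.Walk u u} (h : p.IsCycle) :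
    p.support.dropLast.Nodup := by
  have h3 := h.three_le_length
  have hs : p.support = u :: p.support.tail := p.support_eq_cons
  have htne : p.support.tail ≠ [] := by
    intro he
    have hl : p.support.length = p.length + 1 := p.length_support
    rw [hs, he] at hl
    simp only [List.length_cons, List.length_nil] at hl
    omega
  rw [hs, List.dropLast_cons_of_ne_nil htne]
  refine List.nodup_cons.mpr ⟨?_, (List.dropLast_sublist _).nodup h.support_nodup⟩
  intro hmem
  have hlast : p.support.tail.getLast htne = u := by
    rw [List.getLast_tail]
    exact p.getLast_support
  have hnd := h.support_nodup
  conv at hnd => rw [← List.dropLast_append_getLast htne]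
  rw [List.nodup_append] at hnd
  exact hnd.2.2 u hmem _ (List.mem_singleton_self _) hlast.symm

lemma darts_ne_nil {u : V} {p : G.Walk u u} (h : p.IsCycle) : p.darts ≠ [] := by
  have h3 := h.three_le_length
  intro he
  rw [← p.length_darts, he] at h3
  simp at h3

variable {k : ℕ} {v : Fin k → V}

def mOf (w : ∀ i : Fin k, G.Walk (v i) (v i)) : Finset (Finset V × Finset V) :=
  Finset.univ.biUnion fun i =>
    ((w i).darts.map fun d => (({d.fst, d.snd} : Finset V), ({d.fst} : Finset V))).toFinset

variable {w : ∀ i : Fin k, G.Walk (v i) (v i)}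

lemma mem_mOf {p : Finset V × Finset V} :
    p ∈ mOf w ↔ ∃ i, ∃ d ∈ (w i).darts, p = (({d.fst, d.snd} : Finset V), ({d.fst} : Finset V)) := by
  simp only [mOf, Finset.mem_biUnion, Finset.mem_univ, true_and, List.mem_toFinset, List.mem_map]
  constructor
  · rintro ⟨i, d, hd, rfl⟩
    exact ⟨i, d, hd, rfl⟩
  · rintro ⟨i, d, hd, rfl⟩
    exact ⟨i, d, hd, rfl⟩

variable (hc : ∀ i, (w i).IsCycle)
variable (hd : ∀ i j, i ≠ j → ∀ x : V, x ∈ (w i).support → x ∉ (w j).support)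

include hc hd in
lemma fst_inj {i j : Fin k} {d d' : G.Dart}
    (hi : d ∈ (w i).darts) (hj : d' ∈ (w j).darts) (hf : d.fst = d'.fst) :
    i = j ∧ d = d' := by
  have hij : i = j := by
    by_contra hne
    exact hd i j hne d.fst ((w i).dart_fst_mem_support_of_mem_darts hi)
      (hf ▸ (w j).dart_fst_mem_support_of_mem_darts hj)
  subst hij
  refine ⟨rfl, ?_⟩
  have hnd : ((w i).darts.map (·.fst)).Nodup := by
    rw [SimpleGraph.Walk.map_fst_darts]
    exact dropLast_support_nodup (hc i)
  exact List.inj_on_of_nodup_map hnd hi hj hf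

include hc hd in
lemma pair_inj {i j : Fin k} {d d' : G.Dart}
    (hi : d ∈ (w i).darts) (hj : d' ∈ (w j).darts)
    (hp : ({d.fst, d.snd} : Finset V) = {d'.fst, d'.snd}) :
    i = j ∧ d = d' := by
  have hij : i = j := by
    by_contra hne
    have h1 : d.fst ∈ ({d'.fst, d'.snd} : Finset V) := by rw [← hp]; simp
    simp only [Finset.mem_insert, Finset.mem_singleton] at h1
    have hsup : d.fst ∈ (w j).support := by
      rcases h1 with h1 | h1
      · exact h1 ▸ (w j).dart_fst_mem_support_of_mem_darts hj
      · exact h1 ▸ (w j).dart_snd_mem_support_of_mem_darts hj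
    exact hd i j hne _ ((w i).dart_fst_mem_support_of_mem_darts hi) hsup
  subst hij
  refine ⟨rfl, ?_⟩
  have hnde : ((w i).darts.map SimpleGraph.Dart.edge).Nodup := (hc i).edges_nodup
  rcases pair_eq hp with ⟨h1, h2⟩ | ⟨h1, h2⟩
  · exact (fst_inj hc hd hi hj h1).2
  · have he : d.edge = d'.edge := by
      show s(d.fst, d.snd) = s(d'.fst, d'.snd)
      rw [h1, h2, Sym2.eq_swap]
    have hdd := List.inj_on_of_nodup_map hnde hi hj he
    subst hdd
    exact absurd h1 d.adj.ne

include hc hd in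
lemma isMatching_mOf : IsMatching (GraphArc G) (mOf w) := by
  constructor
  · rintro p hp
    obtain ⟨i, d, hdi, rfl⟩ := mem_mOf.mp hp
    exact ⟨d.fst, d.snd, d.adj, rfl, Or.inl rfl⟩
  · rintro p hp q hq hne
    obtain ⟨i, d, hdi, rfl⟩ := mem_mOf.mp hp
    obtain ⟨j, d', hdj, rfl⟩ := mem_mOf.mp hq
    refine ⟨?_, ?_, ?_, ?_⟩
    · intro h
      exact hne (by rw [(pair_inj hc hd hdi hdj h).2])
    · intro h
      exact card1_ne_pair d.adj.ne h.symm
    · intro h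
      exact card1_ne_pair d'.adj.ne h
    · intro h
      have hdd := (fst_inj hc hd hdi hdj (Finset.singleton_injective h)).2
      exact hne (by rw [hdd])

lemma step_mem {i : Fin k} {d : G.Dart} (hdi : d ∈ (w i).darts) :
    (({d.fst, d.snd} : Finset V), ({d.fst} : Finset V)) ∈ mOf w :=
  mem_mOf.mpr ⟨i, d, hdi, rfl⟩

include hc hd in
lemma rev_not_mem {i : Fin k} {d : G.Dart} (hdi : d ∈ (w i).darts) :
    ((({d.fst, d.snd} : Finset V), ({d.snd} : Finset V))) ∉ mOf w := by
  intro h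
  obtain ⟨j, d', hdj, heq⟩ := mem_mOf.mp h
  have h1 : ({d.fst, d.snd} : Finset V) = {d'.fst, d'.snd} := congrArg Prod.fst heq
  obtain ⟨hij, hdd⟩ := pair_inj hc hd hdi hdj h1
  subst hdd
  have h2 : ({d.snd} : Finset V) = {d.fst} := congrArg Prod.snd heq
  exact d.adj.ne (Finset.singleton_injective h2).symm

lemma step1 {i : Fin k} {d : G.Dart} (hdi : d ∈ (w i).darts) :
    MStep (GraphArc G) (mOf w) {d.fst} {d.fst, d.snd} :=
  Or.inr ⟨⟨d.fst, d.snd, d.adj, rfl, Or.inl rfl⟩, step_mem hdi⟩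

include hc hd in
lemma step2 {i : Fin k} {d : G.Dart} (hdi : d ∈ (w i).darts) :
    MStep (GraphArc G) (mOf w) {d.fst, d.snd} {d.snd} :=
  Or.inl ⟨⟨d.fst, d.snd, d.adj, rfl, Or.inr rfl⟩, rev_not_mem hc hd hdi⟩

lemma chain'_interleave {R : Finset V → Finset V → Prop} {x : V} (ds : List G.Dart)
    (h1 : ∀ d ∈ ds, R {d.fst} {d.fst, d.snd})
    (h2 : ∀ d ∈ ds, R {d.fst, d.snd} {d.snd})
    (hadj : ds.Chain' G.DartAdj)
    (hlast : ∀ h : ds ≠ [], (ds.getLast h).snd = x) :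
    List.Chain' R (interleave ds ++ [({x} : Finset V)]) := by
  induction ds with
  | nil => simp [interleave]; exact List.isChain_singleton _
  | cons d rest ih =>
    show List.Chain' R ({d.fst} :: {d.fst, d.snd} :: (interleave rest ++ [({x} : Finset V)]))
    refine List.isChain_cons_cons.mpr ⟨h1 d (by simp), ?_⟩
    cases rest with
    | nil =>
      have hx : d.snd = x := hlast (by simp)
      show List.Chain' R [{d.fst, d.snd}, {x}]
      exact List.isChain_cons_cons.mpr ⟨hx ▸ h2 d (by simp), List.isChain_singleton _⟩
    | cons d' rest' =>
      have hda : d.snd = d'.fst := (List.isChain_cons_cons.mp hadj).1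
      have ihh : List.Chain' R (interleave (d' :: rest') ++ [({x} : Finset V)]) := by
        refine ih (fun e he => h1 e (by simp [he])) (fun e he => h2 e (by simp [he]))
          (hadj.tail) ?_
        intro h
        rw [← List.getLast_cons (a := d) h]
        exact hlast (by simp)
      show List.Chain' R ({d.fst, d.snd} :: ({d'.fst} :: ({d'.fst, d'.snd} :: (interleave rest' ++ [({x} : Finset V)]))))
      refine List.isChain_cons_cons.mpr ⟨?_, ihh⟩
      rw [show ({d'.fst} : Finset V) = {d.snd} from by rw [hda]]
      exact h2 d (by simp)

lemma nodup_interleave (ds : List G.Dart)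
    (hf : ∀ d ∈ ds, ∀ d' ∈ ds, d.fst = d'.fst → d = d')
    (he : ∀ d ∈ ds, ∀ d' ∈ ds, ({d.fst, d.snd} : Finset V) = {d'.fst, d'.snd} → d = d')
    (hnd : ds.Nodup) : (interleave ds).Nodup := by
  induction ds with
  | nil => simp [interleave]
  | cons d rest ih =>
    have hdr : d ∉ rest := (List.nodup_cons.mp hnd).1
    show (({d.fst} : Finset V) :: {d.fst, d.snd} :: interleave rest).Nodup
    refine List.nodup_cons.mpr ⟨?_, List.nodup_cons.mpr ⟨?_, ?_⟩⟩
    · simp only [List.mem_cons]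
      rintro (h | h)
      · exact card1_ne_pair d.adj.ne h
      · rcases mem_interleave.mp h with ⟨d', hd', (h' | h')⟩
        · exact hdr ((hf d (by simp) d' (by simp [hd']) (Finset.singleton_injective h')) ▸ hd')
        · exact card1_ne_pair d'.adj.ne h'
    · intro h
      rcases mem_interleave.mp h with ⟨d', hd', (h' | h')⟩
      · exact card1_ne_pair d.adj.ne h'.symm
      · exact hdr ((he d (by simp) d' (by simp [hd']) h') ▸ hd')
    · exact ih (fun a ha b hb => hf a (by simp [ha]) b (by simp [hb]))
        (fun a ha b hb => he a (by simp [ha]) b (by simp [hb])) (List.nodup_cons.mp hnd).2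

def gammaOf (w : ∀ i : Fin k, G.Walk (v i) (v i)) (i : Fin k) : List (Finset V) :=
  interleave (w i).darts

include hc hd in
lemma isCycleList_gamma (i : Fin k) :
    IsCycleList (MStep (GraphArc G) (mOf w)) (gammaOf w i) := by
  have hne := darts_ne_nil (hc i)
  obtain ⟨d, rest, hds⟩ : ∃ d rest, (w i).darts = d :: rest := by
    cases h : (w i).darts with
    | nil => exact absurd h hne
    | cons a b => exact ⟨a, b, rfl⟩
  have hnodup : (interleave (w i).darts).Nodup :=
    nodup_interleave _ (fun a ha b hb hab => (fst_inj hc hd ha hb hab).2)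
      (fun a ha b hb hab => (pair_inj hc hd ha hb hab).2)
      ((hc i).edges_nodup.of_map)
  have hchain : List.Chain' (MStep (GraphArc G) (mOf w))
      (interleave (w i).darts ++ [({v i} : Finset V)]) :=
    chain'_interleave _ (fun e he => step1 he) (fun e he => step2 hc hd he)
      ((w i).isChain_dartAdj_darts) (fun h => by simp)
  have hdfst : d.fst = v i := by
    have hsup := (w i).map_fst_darts_append
    rw [hds, (w i).support_eq_cons] at hsup
    have hhd := congrArg List.head? hsup
    simp only [List.map_cons, List.cons_append, List.head?_cons, Option.some.injEq] at hhd
    exact hhd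
  rw [show ({v i} : Finset V) = {d.fst} from by rw [hdfst]] at hchain
  rw [hds] at hnodup hchain
  show IsCycleList (MStep (GraphArc G) (mOf w)) (interleave (w i).darts)
  rw [hds]
  show IsCycleList (MStep (GraphArc G) (mOf w))
    (({d.fst} : Finset V) :: ({d.fst, d.snd} :: interleave rest))
  exact ⟨hnodup, hchain⟩

include hc in
lemma mem_gamma_iff {i : Fin k} {σ : Finset V} :
    σ ∈ gammaOf w i ↔ ((∃ x ∈ (w i).support, σ = {x}) ∨
      (∃ x y : V, s(x, y) ∈ (w i).edges ∧ σ = {x, y})) := by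
  rw [gammaOf, mem_interleave]
  constructor
  · rintro ⟨d, hd, (rfl | rfl)⟩
    · exact Or.inl ⟨d.fst, (w i).dart_fst_mem_support_of_mem_darts hd, rfl⟩
    · refine Or.inr ⟨d.fst, d.snd, ?_, rfl⟩
      exact (List.mem_map_of_mem (f := SimpleGraph.Dart.edge) hd : d.edge ∈ (w i).edges)
  · rintro (⟨x, hx, rfl⟩ | ⟨x, y, hxy, rfl⟩)
    · have hx' : x ∈ (w i).darts.map (·.fst) ++ [v i] := by
        rw [SimpleGraph.Walk.map_fst_darts_append]
        exact hx
      rcases List.mem_append.mp hx' with h | h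
      · obtain ⟨d, hdm, hdx⟩ := List.mem_map.mp h
        exact ⟨d, hdm, Or.inl (by rw [hdx])⟩
      · have hxv : x = v i := by simpa using h
        have hne := darts_ne_nil (hc i)
        refine ⟨(w i).darts.head hne, List.head_mem hne, Or.inl ?_⟩
        rw [hxv, SimpleGraph.Walk.head_darts_eq_firstDart hne]; rfl
    · have hxy' : s(x, y) ∈ (w i).darts.map SimpleGraph.Dart.edge := hxy
      obtain ⟨d, hdm, hde⟩ := List.mem_map.mp hxy'
      have hde' : s(d.fst, d.snd) = s(x, y) := hde
      rcases Sym2.eq_iff.mp hde' with ⟨h1, h2⟩ | ⟨h1, h2⟩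
      · exact ⟨d, hdm, Or.inr (by rw [h1, h2])⟩
      · exact ⟨d, hdm, Or.inr (by rw [h1, h2, Finset.pair_comm])⟩

open scoped Classical in
noncomputable def fOf (m : Finset (Finset V × Finset V)) (σ : Finset V) : Finset V :=
  if h : ∃ τ, (τ, σ) ∈ m then h.choose
  else if h2 : ∃ τ, (σ, τ) ∈ m then σ \ h2.choose
  else σ

include hc hd in
lemma det {x y z : Finset V}
    (hxy : MStep (GraphArc G) (mOf w) x y) (hyz : MStep (GraphArc G) (mOf w) y z) :
    z = fOf (mOf w) y := by
  rcases hyz with ⟨⟨u', v', hadj, hy, hz⟩, hnm⟩ | ⟨_, hm⟩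
  · -- forward arc y → z
    have hym : (y, x) ∈ mOf w := by
      rcases hxy with ⟨⟨u2, v2, hadj2, hx2, hy2⟩, _⟩ | ⟨_, hm'⟩
      · exfalso
        have hcard : y.card = 2 := by rw [hy]; exact Finset.card_pair hadj.ne
        rcases hy2 with rfl | rfl <;> simp at hcard
      · exact hm'
    obtain ⟨i, d, hdi, heq⟩ := mem_mOf.mp hym
    have hy' : y = ({d.fst, d.snd} : Finset V) := congrArg Prod.fst heq
    have hb1 : ¬ ∃ τ, (τ, y) ∈ mOf w := by
      rintro ⟨τ, hτ⟩
      obtain ⟨j, d', hdj, heq'⟩ := mem_mOf.mp hτ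
      have hy2 : y = ({d'.fst} : Finset V) := congrArg Prod.snd heq'
      have : (2 : ℕ) = 1 := by
        rw [← Finset.card_pair d.adj.ne, ← hy', hy2, Finset.card_singleton]
      omega
    have hb2 : ∃ τ, (y, τ) ∈ mOf w := ⟨{d.fst}, by rw [hy']; exact step_mem hdi⟩
    have hsp := hb2.choose_spec
    obtain ⟨j, d', hdj, heq'⟩ := mem_mOf.mp hsp
    have hpair : ({d.fst, d.snd} : Finset V) = {d'.fst, d'.snd} := by
      rw [← hy']; exact congrArg Prod.fst heq'
    obtain ⟨hij, hdd⟩ := pair_inj hc hd hdi hdj hpair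
    subst hdd
    have hch : hb2.choose = ({d.fst} : Finset V) := congrArg Prod.snd heq'
    have hyd : y \ hb2.choose = ({d.snd} : Finset V) := by
      rw [hch, hy']
      rw [Finset.sdiff_singleton_eq_erase]
      exact Finset.erase_insert (by simp [d.adj.ne])
    rw [fOf, dif_neg hb1, dif_pos hb2, hyd]
    -- identify z
    have hp : ({u', v'} : Finset V) = {d.fst, d.snd} := by rw [← hy, hy']
    have hz' : z = ({d.fst} : Finset V) ∨ z = ({d.snd} : Finset V) := by
      rcases pair_eq hp with ⟨e1, e2⟩ | ⟨e1, e2⟩ <;> rcases hz with rfl | rfl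
      · exact Or.inl (by rw [e1])
      · exact Or.inr (by rw [e2])
      · exact Or.inr (by rw [e1])
      · exact Or.inl (by rw [e2])
    rcases hz' with rfl | rfl
    · exact absurd (by rw [hy']; exact step_mem hdi) hnm
    · rfl
  · -- reversed arc: (z, y) ∈ m
    have hb1 : ∃ τ, (τ, y) ∈ mOf w := ⟨z, hm⟩
    rw [fOf, dif_pos hb1]
    by_contra hne
    have hpq : (hb1.choose, y) ≠ (z, y) := by
      intro hh
      injection hh with h1 _
      exact hne h1.symm
    exact ((isMatching_mOf hc hd).2 _ hb1.choose_spec _ hm hpq).2.2.2 rfl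

include hc hd in
lemma cycles_iff {γ : List (Finset V)} :
    γ ∈ cyclesOf (GraphArc G) (mOf w) ↔ ∃ i, γ ~r gammaOf w i := by
  constructor
  · intro h
    have h' : IsCycleList (MStep (GraphArc G) (mOf w)) γ := h
    have hsing : ∃ σ ∈ γ, ∃ i, ∃ d ∈ (w i).darts, σ = ({d.fst} : Finset V) := by
      rcases γ with _ | ⟨a, l⟩
      · exact h'.elim
      have ha : a ∈ a :: l := by simp
      obtain ⟨b, hbγ, hab⟩ := exists_succ_mem h' ha
      rcases hab with ⟨⟨u, v2, hadj, hA, hB⟩, _⟩ | ⟨_, hm⟩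
      · obtain ⟨c2, hc2, hbc⟩ := exists_succ_mem h' hbγ
        rcases hbc with ⟨⟨u2, v3, hadj2, hB2, _⟩, _⟩ | ⟨_, hm2⟩
        · exfalso
          have hcard : b.card = 1 := by rcases hB with rfl | rfl <;> simp
          rw [hB2, Finset.card_pair hadj2.ne] at hcard
          omega
        · obtain ⟨i, d, hdi, heq⟩ := mem_mOf.mp hm2
          exact ⟨b, hbγ, i, d, hdi, congrArg Prod.snd heq⟩
      · obtain ⟨i, d, hdi, heq⟩ := mem_mOf.mp hm
        exact ⟨a, ha, i, d, hdi, congrArg Prod.snd heq⟩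
    obtain ⟨σ, hσ, i, d, hdi, rfl⟩ := hsing
    obtain ⟨t, hr⟩ := exists_rotate_head hσ
    have hγ' := isCycleList_rotate h' hr
    have hmem : ({d.fst} : Finset V) ∈ gammaOf w i := by
      rw [gammaOf, mem_interleave]
      exact ⟨d, hdi, Or.inl rfl⟩
    obtain ⟨t', hr'⟩ := exists_rotate_head hmem
    have hγ'' := isCycleList_rotate (isCycleList_gamma hc hd i) hr'
    have htt : t = t' :=
      cycle_eq (f := fOf (mOf w)) (fun x y z hxy hyz => det hc hd hxy hyz) hγ' hγ''
    exact ⟨i, hr.trans (htt ▸ hr'.symm)⟩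
  · rintro ⟨i, hr⟩
    exact isCycleList_rotate (isCycleList_gamma hc hd i) hr.symm

include hc hd in
lemma gamma_not_rotated {i j : Fin k} (hij : i ≠ j) : ¬ (gammaOf w i ~r gammaOf w j) := by
  intro hr
  have hne := darts_ne_nil (hc i)
  set d := (w i).darts.head hne with hdd
  have hmi : ({d.fst} : Finset V) ∈ gammaOf w i := by
    rw [gammaOf, mem_interleave]
    exact ⟨d, List.head_mem hne, Or.inl rfl⟩
  have hmj : ({d.fst} : Finset V) ∈ gammaOf w j := hr.perm.mem_iff.mp hmi
  rw [gammaOf, mem_interleave] at hmj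
  rcases hmj with ⟨d', hd', (h | h)⟩
  · have hff : d.fst = d'.fst := Finset.singleton_injective h
    exact hd i j hij d.fst ((w i).dart_fst_mem_support_of_mem_darts (List.head_mem hne))
      (hff ▸ (w j).dart_fst_mem_support_of_mem_darts hd')
  · exact card1_ne_pair d'.adj.ne h

end MRVDC5


/-- given any finite collection of pairwise vertex-disjoint cycles
`γ_1, …, γ_k` in a simple graph `G`, there is a matching `m` on the face poset `F(G)`
whose induced oriented cycles correspond exactly to the given cycles: for each `i`
there is an induced oriented cycle of length `2·ℓ(γ_i)` traversing precisely the
vertex- and edge-faces of `γ_i`, every induced oriented cycle is supported on some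
`γ_i`, and `J(m) = k`.  In particular the orientation-forgetting projection to
collections of vertex-disjoint cycles of `G` is surjective. -/
theorem matching_realizing_vertex_disjoint_cycles {V : Type*} [Fintype V] [DecidableEq V]
    (G : SimpleGraph V) (k : ℕ) (v : Fin k → V) (w : ∀ i, G.Walk (v i) (v i))
    (hc : ∀ i, (w i).IsCycle)
    (hd : ∀ i j, i ≠ j → ∀ x : V, x ∈ (w i).support → x ∉ (w j).support) :
    ∃ m : Finset (Finset V × Finset V), IsMatching (GraphArc G) m ∧
      (∀ i, ∃ γ ∈ cyclesOf (GraphArc G) m,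
        γ.length = 2 * (w i).length ∧
        (∀ σ : Finset V, σ ∈ γ ↔
          ((∃ x ∈ (w i).support, σ = {x}) ∨
            (∃ x y : V, s(x, y) ∈ (w i).edges ∧ σ = {x, y})))) ∧
      (∀ γ ∈ cyclesOf (GraphArc G) m, ∃ i, ∀ σ ∈ γ,
        ((∃ x ∈ (w i).support, σ = {x}) ∨
          (∃ x y : V, s(x, y) ∈ (w i).edges ∧ σ = {x, y}))) ∧
      numCycles (GraphArc G) m = k := by
  classical
  refine ⟨MRVDC5.mOf w, MRVDC5.isMatching_mOf hc hd, ?_, ?_, ?_⟩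
  · intro i
    refine ⟨MRVDC5.gammaOf w i, MRVDC5.isCycleList_gamma hc hd i, ?_,
      fun σ => MRVDC5.mem_gamma_iff hc⟩
    rw [MRVDC5.gammaOf, MRVDC5.length_interleave, SimpleGraph.Walk.length_darts]
  · intro γ hγ
    obtain ⟨i, hr⟩ := (MRVDC5.cycles_iff hc hd).mp hγ
    exact ⟨i, fun σ hσ => (MRVDC5.mem_gamma_iff hc).mp (hr.perm.mem_iff.mp hσ)⟩
  · rw [numCycles]
    have himg : Quotient.mk (List.IsRotated.setoid (Finset V)) ''
          cyclesOf (GraphArc G) (MRVDC5.mOf w)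
        = Set.range fun i =>
            Quotient.mk (List.IsRotated.setoid (Finset V)) (MRVDC5.gammaOf w i) := by
      ext q
      simp only [Set.mem_image, Set.mem_range]
      constructor
      · rintro ⟨γ, hγ, rfl⟩
        obtain ⟨i, hr⟩ := (MRVDC5.cycles_iff hc hd).mp hγ
        exact ⟨i, (Quotient.sound hr).symm⟩
      · rintro ⟨i, rfl⟩
        exact ⟨MRVDC5.gammaOf w i,
          (MRVDC5.cycles_iff hc hd).mpr ⟨i, List.IsRotated.refl _⟩, rfl⟩
    rw [himg, ← Set.image_univ, Set.ncard_image_of_injective _ ?_, Set.ncard_univ,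
      Nat.card_eq_fintype_card, Fintype.card_fin]
    intro i j hq
    by_contra hij
    exact MRVDC5.gamma_not_rotated hc hd hij (Quotient.exact hq)
end

section
/- Let X be a finite abstract simplicial complex, and let Ĉ(X) be the 𝔽₂-vector space with basis the nonempty matchings on F(X). Define the linear map ∂_J on Ĉ(X) by ∂_J(m) = Σ (m \ {e}), the sum ranging over those e ∈ m with |m| ≥ 2 and J(m \ {e}) = J(m), and ∂_J(m) = 0 if |m| = 1. Then ∂_J ∘ ∂_J = 0; that is, ∂_J is a differential on Ĉ(X). -/
open scoped Classical in
/-- The `J`-preserving part `∂_J` of the simplicial differential on the 𝔽₂-vector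
space with basis the finite subsets of arcs (extended linearly from its values on
basis elements): `∂_J m = Σ (m \ {e})`, the sum over those `e ∈ m` with `|m| ≥ 2` and
`J(m \ {e}) = J(m)`; in particular `∂_J m = 0` when `|m| = 1`. -/
noncomputable def bdryJ {α : Type*} [DecidableEq α] (A : α → α → Prop) :
    (Finset (α × α) →₀ ZMod 2) → (Finset (α × α) →₀ ZMod 2) :=
  fun x => x.sum fun m c =>
    c • (m.filter (fun e => 2 ≤ m.card ∧ numCycles A (m.erase e) = numCycles A m)).sum
      (fun e => Finsupp.single (m.erase e) (1 : ZMod 2))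

/-! ### Auxiliary lemmas -/

private lemma matching_subset {α : Type*} {A : α → α → Prop} {m m' : Finset (α × α)}
    (h : m' ⊆ m) (hm : IsMatching A m) : IsMatching A m' :=
  ⟨fun p hp => hm.1 p (h hp), fun p hp q hq hne => hm.2 p (h hp) q (h hq) hne⟩

private lemma succ_mod_inj {k i j : ℕ} (hi : i < k) (hj : j < k)
    (h : (i + 1) % k = (j + 1) % k) : i = j := by
  have h1 : (i + 1) % k = if i + 1 = k then 0 else i + 1 := by
    split
    · next hh => rw [hh, Nat.mod_self]
    · exact Nat.mod_eq_of_lt (by omega)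
  have h2 : (j + 1) % k = if j + 1 = k then 0 else j + 1 := by
    split
    · next hh => rw [hh, Nat.mod_self]
    · exact Nat.mod_eq_of_lt (by omega)
  rw [h1, h2] at h
  split at h <;> split at h <;> omega

/-- The key geometric fact: if `v` is a (periodic) directed cycle of the digraph
obtained from the face poset by reversing the arcs of `m.erase e`, then no step of
the cycle traverses the arc `e` downwards. -/
private lemma no_e_step {V : Type*} [DecidableEq V] (X : Finset (Finset V))
    {m : Finset (Finset V × Finset V)} (hm : IsMatching (FaceArc X) m)
    {e : Finset V × Finset V} (he : e ∈ m) {k : ℕ} (hk : 0 < k)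
    (v : ℕ → Finset V)
    (hper : ∀ i, v (i % k) = v i)
    (hper1 : ∀ i, v (i % k + 1) = v (i + 1))
    (hstep : ∀ i, MStep (FaceArc X) (m.erase e) (v i) (v (i + 1))) :
    ∀ i, (v i, v (i + 1)) ≠ e := by
  classical
  obtain ⟨e1, e2⟩ := e
  intro i₀' heq'
  set i₀ := i₀' % k with hi₀def
  have hi₀k : i₀ < k := Nat.mod_lt _ hk
  have heq : (v i₀, v (i₀ + 1)) = (e1, e2) := by
    rw [hi₀def, hper i₀', hper1 i₀']; exact heq'
  rw [Prod.mk.injEq] at heq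
  obtain ⟨he1, he2⟩ := heq
  -- card facts
  have hcard_up : ∀ i, (v (i + 1), v i) ∈ m.erase (e1, e2) →
      (v i).card + 1 = (v (i + 1)).card := fun i h =>
    (hm.1 _ (Finset.mem_of_mem_erase h)).2.2.2
  have hcard_down : ∀ i, (v (i + 1), v i) ∉ m.erase (e1, e2) →
      (v (i + 1)).card + 1 = (v i).card := by
    intro i h
    rcases hstep i with ⟨hA, _⟩ | ⟨_, hmem⟩
    · exact hA.2.2.2
    · exact absurd hmem h
  -- no two consecutive up-steps
  have noconsec : ∀ i, (v (i + 1), v i) ∈ m.erase (e1, e2) →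
      (v (i + 1 + 1), v (i + 1)) ∈ m.erase (e1, e2) → False := by
    intro i h1 h2
    have h1m := Finset.mem_of_mem_erase h1
    have h2m := Finset.mem_of_mem_erase h2
    by_cases hpq : ((v (i + 1), v i) : Finset V × Finset V) = (v (i + 1 + 1), v (i + 1))
    · have hb : v i = v (i + 1) := congrArg Prod.snd hpq
      have hc := hcard_up i h1
      rw [hb] at hc; omega
    · exact (hm.2 _ h1m _ h2m hpq).2.1 rfl
  -- the step at i₀ is not an up-step
  have hnotup_i₀ : (v (i₀ + 1), v i₀) ∉ m.erase (e1, e2) := by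
    intro hcon
    have hA1 : (v i₀).card + 1 = (v (i₀ + 1)).card :=
      (hm.1 _ (Finset.mem_of_mem_erase hcon)).2.2.2
    have hA2 : e2.card + 1 = e1.card := (hm.1 _ he).2.2.2
    rw [he1, he2] at hA1
    omega
  -- the predecessor step of i₀ is not an up-step either
  set j₀ := (i₀ + k - 1) % k with hj₀def
  have hj₀k : j₀ < k := Nat.mod_lt _ hk
  have hsucc : (j₀ + 1) % k = i₀ := by
    have h1 : (i₀ + k - 1) % k + 1 ≡ (i₀ + k - 1) + 1 [MOD k] :=
      (Nat.mod_modEq _ k).add_right 1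
    have h2 : (i₀ + k - 1) + 1 = i₀ + k := by omega
    calc (j₀ + 1) % k = ((i₀ + k - 1) + 1) % k := h1
      _ = (i₀ + k) % k := by rw [h2]
      _ = i₀ % k := Nat.add_mod_right i₀ k
      _ = i₀ := Nat.mod_eq_of_lt hi₀k
  have hvj₀ : v (j₀ + 1) = v i₀ := by rw [← hper (j₀ + 1), hsucc, hper]
  have hnotup_j₀ : (v (j₀ + 1), v j₀) ∉ m.erase (e1, e2) := by
    intro hcon
    rw [hvj₀, he1] at hcon
    by_cases hpe : ((e1, v j₀) : Finset V × Finset V) = (e1, e2)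
    · exact Finset.notMem_erase (e1, e2) m (hpe ▸ hcon)
    · exact (hm.2 _ (Finset.mem_of_mem_erase hcon) _ he hpe).1 rfl
  -- counting
  have htel : ∑ i ∈ Finset.range k, (((v (i + 1)).card : ℤ) - (v i).card) = 0 := by
    rw [Finset.sum_range_sub (fun i => ((v i).card : ℤ))]
    have hv : v k = v 0 := by rw [← hper k, Nat.mod_self]
    rw [hv, sub_self]
  have hterm : ∀ i ∈ Finset.range k, (((v (i + 1)).card : ℤ) - (v i).card) =
      (if (v (i + 1), v i) ∈ m.erase (e1, e2) then (1 : ℤ) else -1) := by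
    intro i _
    split
    · next h => have := hcard_up i h; push_cast; omega
    · next h => have := hcard_down i h; push_cast; omega
  have hsum : ∑ i ∈ Finset.range k,
      (if (v (i + 1), v i) ∈ m.erase (e1, e2) then (1 : ℤ) else -1) = 0 := by
    rw [← Finset.sum_congr rfl hterm]; exact htel
  rw [Finset.sum_ite, Finset.sum_const, Finset.sum_const] at hsum
  set U := (Finset.range k).filter (fun i => (v (i + 1), v i) ∈ m.erase (e1, e2)) with hU
  set D := (Finset.range k).filter (fun i => (v (i + 1), v i) ∉ m.erase (e1, e2)) with hD
  have hcards : U.card = D.card := by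
    simp only [nsmul_eq_mul, mul_one, mul_neg] at hsum
    omega
  -- injection from `insert j₀ U` into `D`
  have hj₀U : j₀ ∉ U := by
    rw [hU, Finset.mem_filter]
    rintro ⟨-, hcon⟩
    exact hnotup_j₀ hcon
  have hmaps : ∀ i ∈ insert j₀ U, (i + 1) % k ∈ D := by
    intro i hi
    rcases Finset.mem_insert.mp hi with rfl | hiU
    · rw [hsucc, hD, Finset.mem_filter]
      exact ⟨Finset.mem_range.mpr hi₀k, hnotup_i₀⟩
    · rw [hU, Finset.mem_filter] at hiU
      obtain ⟨-, hupi⟩ := hiU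
      rw [hD, Finset.mem_filter]
      refine ⟨Finset.mem_range.mpr (Nat.mod_lt _ hk), ?_⟩
      intro hcon
      rw [hper1 (i + 1), hper (i + 1)] at hcon
      exact noconsec i hupi hcon
  have hinj : Set.InjOn (fun i => (i + 1) % k) ↑(insert j₀ U) := by
    intro i hi j hj hij
    have hik : i < k := by
      rcases Finset.mem_insert.mp hi with rfl | h
      · exact hj₀k
      · exact Finset.mem_range.mp (Finset.mem_filter.mp (hU ▸ h)).1
    have hjk : j < k := by
      rcases Finset.mem_insert.mp hj with rfl | h
      · exact hj₀k
      · exact Finset.mem_range.mp (Finset.mem_filter.mp (hU ▸ h)).1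
    exact succ_mod_inj hik hjk hij
  have hle := Finset.card_le_card_of_injOn _ hmaps hinj
  rw [Finset.card_insert_of_notMem hj₀U] at hle
  omega

private lemma cyclesOf_erase_subset {V : Type*} [DecidableEq V] (X : Finset (Finset V))
    {m : Finset (Finset V × Finset V)} (hm : IsMatching (FaceArc X) m)
    {e : Finset V × Finset V} (he : e ∈ m) :
    cyclesOf (FaceArc X) (m.erase e) ⊆ cyclesOf (FaceArc X) m := by
  classical
  intro l hl
  match l, hl with
  | a :: t, ⟨hnd, hch⟩ =>
    refine ⟨hnd, ?_⟩
    set L : List (Finset V) := (a :: t) ++ [a] with hLdef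
    set k := (a :: t).length with hkdef
    have hk : 0 < k := by simp [hkdef]
    have hLlen : L.length = k + 1 := by simp [hLdef, hkdef]
    have hch' : List.Chain' (MStep (FaceArc X) (m.erase e)) L := hch
    set v : ℕ → Finset V := fun i => L.getD (i % k) a with hvdef
    have hper : ∀ i, v (i % k) = v i := by
      intro i
      simp only [hvdef]
      rw [Nat.mod_mod_of_dvd _ dvd_rfl]
    have hper1 : ∀ i, v (i % k + 1) = v (i + 1) := by
      intro i
      simp only [hvdef]
      congr 1
      exact (Nat.mod_modEq i k).add_right 1
    have hstepL : ∀ (i : ℕ) (h : i < k), MStep (FaceArc X) (m.erase e)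
        (L.get ⟨i, by omega⟩) (L.get ⟨i + 1, by omega⟩) := by
      intro i h
      exact List.isChain_iff_getElem.mp hch' i (by omega)
    have hvget : ∀ (i : ℕ) (h : i < k), v i = L.get ⟨i, by omega⟩ := by
      intro i h
      simp only [hvdef]
      rw [Nat.mod_eq_of_lt h, List.getD_eq_getElem _ _ (by omega), List.get_eq_getElem]
    have hvsucc : ∀ (i : ℕ) (h : i < k), v (i + 1) = L.get ⟨i + 1, by omega⟩ := by
      intro i h
      rcases Nat.lt_or_ge (i + 1) k with h1 | h1
      · exact hvget (i + 1) h1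
      · have hik : i + 1 = k := by omega
        have hmod : (i + 1) % k = 0 := by rw [hik, Nat.mod_self]
        have hlen2 : (a :: t).length ≤ i + 1 := by rw [← hkdef]; omega
        have hgd : L.getD (i + 1) a = a := by
          rw [hLdef, List.getD_append_right _ _ _ _ hlen2]
          have h0 : i + 1 - (a :: t).length = 0 := by rw [← hkdef]; omega
          rw [h0]
          rfl
        have hget : L.get ⟨i + 1, by omega⟩ = a := by
          rw [← List.getD_eq_get _ a]
          exact hgd
        simp only [hvdef]
        rw [hmod, hget]
        rfl
    have hstep : ∀ i, MStep (FaceArc X) (m.erase e) (v i) (v (i + 1)) := by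
      intro i
      have h1 : i % k < k := Nat.mod_lt _ hk
      have h2 := hstepL (i % k) h1
      rw [← hvget _ h1, ← hvsucc _ h1] at h2
      rwa [hper, hper1] at h2
    have hnoe := no_e_step X hm he hk v hper hper1 hstep
    suffices hS : List.Chain' (MStep (FaceArc X) m) L by exact hS
    refine List.isChain_iff_getElem.mpr ?_
    intro i h
    have hik : i < k := by omega
    have hs := hstepL i hik
    have hne : (L.get ⟨i, by omega⟩, L.get ⟨i + 1, by omega⟩) ≠ e := by
      rw [← hvget _ hik, ← hvsucc _ hik]; exact hnoe i
    rcases hs with ⟨hA, hnm⟩ | ⟨hA, hmem⟩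
    · left
      refine ⟨hA, fun hmem' => ?_⟩
      exact hne (Finset.eq_of_mem_of_notMem_erase hmem' hnm)
    · right
      exact ⟨hA, Finset.mem_of_mem_erase hmem⟩

private lemma cyclesOf_finite {α : Type*} [Fintype α] [DecidableEq α]
    (A : α → α → Prop) (m : Finset (α × α)) :
    (Quotient.mk (List.IsRotated.setoid α) '' cyclesOf A m).Finite := by
  apply Set.Finite.image
  apply Set.Finite.subset (List.finite_length_le α (Fintype.card α))
  intro l hl
  match l, hl with
  | a :: t, ⟨hnd, _⟩ => exact hnd.length_le_card

private lemma numCycles_erase_le {V : Type*} [Fintype V] [DecidableEq V]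
    (X : Finset (Finset V)) {m : Finset (Finset V × Finset V)}
    (hm : IsMatching (FaceArc X) m) {e : Finset V × Finset V} (he : e ∈ m) :
    numCycles (FaceArc X) (m.erase e) ≤ numCycles (FaceArc X) m :=
  Set.ncard_le_ncard (Set.image_mono (cyclesOf_erase_subset X hm he))
    (cyclesOf_finite _ _)

open scoped Classical in
noncomputable def FmJ {α : Type*} [DecidableEq α] (A : α → α → Prop)
    (m : Finset (α × α)) : Finset (α × α) :=
  m.filter (fun e => 2 ≤ m.card ∧ numCycles A (m.erase e) = numCycles A m)

noncomputable def gJ {α : Type*} [DecidableEq α] (A : α → α → Prop)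
    (m : Finset (α × α)) : Finset (α × α) →₀ ZMod 2 :=
  (FmJ A m).sum (fun e => Finsupp.single (m.erase e) (1 : ZMod 2))

private lemma mem_FmJ {α : Type*} [DecidableEq α] {A : α → α → Prop}
    {m : Finset (α × α)} {e : α × α} :
    e ∈ FmJ A m ↔ e ∈ m ∧ 2 ≤ m.card ∧ numCycles A (m.erase e) = numCycles A m := by
  classical
  rw [FmJ, Finset.mem_filter]

private lemma bdryJ_eq {α : Type*} [DecidableEq α] (A : α → α → Prop)
    (x : Finset (α × α) →₀ ZMod 2) :
    bdryJ A x = x.sum (fun m c => c • gJ A m) := rfl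

private lemma pairing {V : Type*} [Fintype V] [DecidableEq V] (X : Finset (Finset V))
    {m : Finset (Finset V × Finset V)} (hm : IsMatching (FaceArc X) m) :
    ∑ e ∈ FmJ (FaceArc X) m, gJ (FaceArc X) (m.erase e) = 0 := by
  classical
  have hrw : ∀ e, gJ (FaceArc X) (m.erase e) =
      ∑ f ∈ FmJ (FaceArc X) (m.erase e),
        Finsupp.single ((m.erase e).erase f) (1 : ZMod 2) := fun e => rfl
  rw [Finset.sum_congr rfl (fun e _ => hrw e), Finset.sum_sigma']
  refine Finset.sum_involution (fun p _ => ⟨p.2, p.1⟩) ?_ ?_ ?_ ?_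
  · intro p hp
    have hcomm : (m.erase p.2).erase p.1 = (m.erase p.1).erase p.2 :=
      Finset.erase_right_comm
    rw [hcomm, ← Finsupp.single_add]
    have h11 : (1 + 1 : ZMod 2) = 0 := rfl
    rw [h11, Finsupp.single_zero]
  · intro p hp _
    rw [Finset.mem_sigma] at hp
    have hp2 : p.2 ∈ m.erase p.1 := (mem_FmJ.mp hp.2).1
    have hne : p.2 ≠ p.1 := Finset.ne_of_mem_erase hp2
    intro hcon
    exact hne (congrArg Sigma.fst hcon)
  · intro p hp
    obtain ⟨pe, pf⟩ := p
    rw [Finset.mem_sigma] at hp ⊢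
    have hp' : pe ∈ FmJ (FaceArc X) m ∧ pf ∈ FmJ (FaceArc X) (m.erase pe) := hp
    show pf ∈ FmJ (FaceArc X) m ∧ pe ∈ FmJ (FaceArc X) (m.erase pf)
    obtain ⟨hp1, hp2⟩ := hp'
    obtain ⟨he, hcm, hJe⟩ := mem_FmJ.mp hp1
    obtain ⟨hf', hcm', hJef⟩ := mem_FmJ.mp hp2
    have hfm : pf ∈ m := Finset.mem_of_mem_erase hf'
    have hfe : pf ≠ pe := Finset.ne_of_mem_erase hf'
    have hcomm : (m.erase pe).erase pf = (m.erase pf).erase pe :=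
      Finset.erase_right_comm
    have hem : IsMatching (FaceArc X) (m.erase pf) :=
      matching_subset (Finset.erase_subset _ _) hm
    have hef : pe ∈ m.erase pf := Finset.mem_erase_of_ne_of_mem (Ne.symm hfe) he
    have l1 : numCycles (FaceArc X) ((m.erase pf).erase pe) ≤
        numCycles (FaceArc X) (m.erase pf) := numCycles_erase_le X hem hef
    have l2 : numCycles (FaceArc X) (m.erase pf) ≤ numCycles (FaceArc X) m :=
      numCycles_erase_le X hm hfm
    have hall : numCycles (FaceArc X) ((m.erase pf).erase pe) =
        numCycles (FaceArc X) m := by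
      rw [← hcomm, hJef, hJe]
    constructor
    · exact mem_FmJ.mpr ⟨hfm, hcm, by omega⟩
    · refine mem_FmJ.mpr ⟨hef, ?_, by omega⟩
      rw [Finset.card_erase_of_mem hfm]
      rw [Finset.card_erase_of_mem he] at hcm'
      exact hcm'
  · intro p hp
    rfl

/-- `∂_J ∘ ∂_J = 0` on the 𝔽₂-vector space `Ĉ(X)` with basis the
nonempty matchings on the face poset of a finite simplicial complex `X`; that is,
`∂_J` is a differential on `Ĉ(X)`. -/
theorem bdryJ_squared_zero {V : Type*} [Fintype V] [DecidableEq V]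
    (X : Finset (Finset V)) (hXne : X.Nonempty)
    (hX0 : ∀ s ∈ X, s ≠ ∅)
    (hXdown : ∀ s ∈ X, ∀ t ⊆ s, t ≠ ∅ → t ∈ X)
    (x : Finset (Finset V × Finset V) →₀ ZMod 2)
    (hx : ∀ m ∈ x.support, IsMatching (FaceArc X) m ∧ m ≠ ∅) :
    bdryJ (FaceArc X) (bdryJ (FaceArc X) x) = 0 := by
  classical
  set A := FaceArc X with hA
  set L : (Finset (Finset V × Finset V) →₀ ZMod 2) →ₗ[ZMod 2]
      (Finset (Finset V × Finset V) →₀ ZMod 2) :=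
    Finsupp.linearCombination (ZMod 2) (gJ A) with hLdef
  have hL : ∀ y, bdryJ A y = L y := by
    intro y
    rw [hLdef, Finsupp.linearCombination_apply]
    rfl
  rw [hL, hL]
  have hx2 : L x = x.sum (fun m c => c • gJ A m) := Finsupp.linearCombination_apply _ x
  rw [hx2, map_finsuppSum, Finsupp.sum]
  apply Finset.sum_eq_zero
  intro m hmsup
  rw [map_smul]
  have hgoal : L (gJ A m) = 0 := by
    have : gJ A m = ∑ e ∈ FmJ A m, Finsupp.single (m.erase e) (1 : ZMod 2) := rfl
    rw [this, map_sum]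
    have hterm : ∀ e ∈ FmJ A m,
        L (Finsupp.single (m.erase e) (1 : ZMod 2)) = gJ A (m.erase e) := by
      intro e _
      rw [hLdef, Finsupp.linearCombination_single, one_smul]
    rw [Finset.sum_congr rfl hterm]
    exact pairing X (hx m hmsup).1
  rw [hgoal, smul_zero]
end

section
/- Let G be a finite simple graph, and let Ĉ(G) be the 𝔽₂-vector space with basis the nonempty matchings on F(G). Define the linear map ∂_d on Ĉ(G) by ∂_d(m) = Σ (m \ {e}), the sum ranging over those e ∈ m with |m| ≥ 2 and J(m \ {e}) = J(m) − 1, and ∂_d(m) = 0 if |m| = 1. Then ∂_d ∘ ∂_d = 0; that is, the diagonal map ∂_d is a differential on Ĉ(G). -/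
open scoped Classical in
/-- The diagonal part `∂_d` of the simplicial differential on the 𝔽₂-vector space
with basis the finite subsets of arcs (extended linearly from its values on basis
elements): `∂_d m = Σ (m \ {e})`, the sum over those `e ∈ m` with `|m| ≥ 2` and
`J(m \ {e}) = J(m) − 1`; in particular `∂_d m = 0` when `|m| = 1`. -/
noncomputable def bdryD {α : Type*} [DecidableEq α] (A : α → α → Prop) :
    (Finset (α × α) →₀ ZMod 2) → (Finset (α × α) →₀ ZMod 2) :=
  fun x => x.sum fun m c =>
    c • (m.filter (fun e => 2 ≤ m.card ∧ numCycles A (m.erase e) + 1 = numCycles A m)).sum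
      (fun e => Finsupp.single (m.erase e) (1 : ZMod 2))

set_option linter.unusedSectionVars false

namespace BdryAux

lemma isCycleList_cons {α : Type*} {R : α → α → Prop} {a : α} {l : List α} :
    IsCycleList R (a :: l) ↔ (a :: l).Nodup ∧ List.Chain R a (l ++ [a]) := Iff.rfl

lemma graphArc_card_fst {V : Type*} [DecidableEq V] {G : SimpleGraph V} {σ τ : Finset V}
    (h : GraphArc G σ τ) : σ.card = 2 := by
  obtain ⟨u, v, huv, rfl, _⟩ := h
  rw [Finset.card_insert_of_notMem (by simp [huv.ne]), Finset.card_singleton]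

lemma graphArc_card_snd {V : Type*} [DecidableEq V] {G : SimpleGraph V} {σ τ : Finset V}
    (h : GraphArc G σ τ) : τ.card = 1 := by
  obtain ⟨u, v, huv, _, h | h⟩ := h <;> simp [h]

lemma graphArc_snd_sub {V : Type*} [DecidableEq V] {G : SimpleGraph V} {σ τ : Finset V}
    (h : GraphArc G σ τ) : ∃ w ∈ σ, τ = {w} := by
  obtain ⟨u, v, huv, rfl, h | h⟩ := h
  · exact ⟨u, by simp, h⟩
  · exact ⟨v, by simp, h⟩

lemma IsMatching.fst_inj {α : Type*} {A : α → α → Prop} {m : Finset (α × α)}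
    (hm : IsMatching A m) {p q : α × α} (hp : p ∈ m) (hq : q ∈ m) (h : p.1 = q.1) : p = q := by
  by_contra hne
  exact (hm.2 p hp q hq hne).1 h

lemma IsMatching.snd_inj {α : Type*} {A : α → α → Prop} {m : Finset (α × α)}
    (hm : IsMatching A m) {p q : α × α} (hp : p ∈ m) (hq : q ∈ m) (h : p.2 = q.2) : p = q := by
  by_contra hne
  exact (hm.2 p hp q hq hne).2.2.2 h

lemma IsMatching.erase {α : Type*} [DecidableEq (α × α)] {A : α → α → Prop} {m : Finset (α × α)}
    (hm : IsMatching A m) (e : α × α) : IsMatching A (m.erase e) :=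
  ⟨fun p hp => hm.1 p (Finset.mem_of_mem_erase hp),
   fun p hp q hq => hm.2 p (Finset.mem_of_mem_erase hp) q (Finset.mem_of_mem_erase hq)⟩

lemma chain_pred {α : Type*} {R : α → α → Prop} :
    ∀ (s : List α) (a : α), List.Chain R a s → ∀ x ∈ s, ∃ y ∈ a :: s, R y x
  | [], _, _, x, hx => absurd hx (List.not_mem_nil)
  | b :: t, a, h, x, hx => by
    rcases List.chain_cons.1 h with ⟨hab, ht⟩
    rcases List.mem_cons.1 hx with rfl | hx
    · exact ⟨a, List.mem_cons_self, hab⟩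
    · obtain ⟨y, hy, hyx⟩ := chain_pred t b ht x hx
      exact ⟨y, List.mem_cons_of_mem _ hy, hyx⟩

lemma chain_succ {α : Type*} {R : α → α → Prop} :
    ∀ (s : List α) (a z : α), List.Chain R a (s ++ [z]) → ∀ x ∈ a :: s, ∃ y ∈ s ++ [z], R x y
  | [], a, z, h, x, hx => by
    have hx' : x = a := by simpa using hx
    subst hx'
    exact ⟨z, by simp, List.isChain_pair.1 h⟩
  | b :: t, a, z, h, x, hx => by
    rcases List.chain_cons.1 h with ⟨hab, ht⟩
    rcases List.mem_cons.1 hx with rfl | hx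
    · exact ⟨b, by simp, hab⟩
    · obtain ⟨y, hy, hxy⟩ := chain_succ t b z ht x hx
      exact ⟨y, by simp only [List.cons_append, List.mem_cons]; right; exact hy, hxy⟩

lemma cycle_pred {α : Type*} {R : α → α → Prop} {l : List α} (h : IsCycleList R l)
    {x : α} (hx : x ∈ l) : ∃ y ∈ l, R y x := by
  cases l with
  | nil => exact h.elim
  | cons a t =>
    obtain ⟨_, hchain⟩ := h
    have hx' : x ∈ t ++ [a] := by
      rcases List.mem_cons.1 hx with rfl | h'
      · simp
      · simp [h']
    obtain ⟨y, hy, hyx⟩ := chain_pred _ _ hchain x hx'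
    refine ⟨y, ?_, hyx⟩
    rcases List.mem_cons.1 hy with rfl | hy
    · exact List.mem_cons_self
    · rcases List.mem_append.1 hy with hy | hy
      · exact List.mem_cons_of_mem _ hy
      · simp only [List.mem_singleton] at hy
        simp [hy]

lemma cycle_succ {α : Type*} {R : α → α → Prop} {l : List α} (h : IsCycleList R l)
    {x : α} (hx : x ∈ l) : ∃ y ∈ l, R x y := by
  cases l with
  | nil => exact h.elim
  | cons a t =>
    obtain ⟨_, hchain⟩ := h
    obtain ⟨y, hy, hxy⟩ := chain_succ _ _ _ hchain x hx
    refine ⟨y, ?_, hxy⟩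
    rcases List.mem_append.1 hy with hy | hy
    · exact List.mem_cons_of_mem _ hy
    · simp only [List.mem_singleton] at hy
      simp [hy]

lemma chain_imp {α : Type*} {R S : α → α → Prop} {P : α → Prop}
    (h : ∀ a b, P a → P b → R a b → S a b) :
    ∀ (l : List α) (a : α), P a → (∀ x ∈ l, P x) → List.Chain R a l → List.Chain S a l
  | [], _, _, _, _ => List.Chain.nil
  | b :: t, a, ha, hl, hc => by
    rcases List.chain_cons.1 hc with ⟨hab, ht⟩
    exact List.chain_cons.2 ⟨h a b ha (hl b (List.mem_cons_self)) hab,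
      chain_imp h t b (hl b (List.mem_cons_self))
        (fun x hx => hl x (List.mem_cons_of_mem _ hx)) ht⟩

lemma cycle_imp {α : Type*} {R S : α → α → Prop} {l : List α} (h : IsCycleList R l)
    (himp : ∀ a b, a ∈ l → b ∈ l → R a b → S a b) : IsCycleList S l := by
  cases l with
  | nil => exact h.elim
  | cons a t =>
    obtain ⟨hnd, hchain⟩ := h
    refine ⟨hnd, ?_⟩
    refine chain_imp (P := fun x => x ∈ a :: t) himp _ _ (List.mem_cons_self) ?_ hchain
    intro x hx
    rcases List.mem_append.1 hx with hx | hx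
    · exact List.mem_cons_of_mem _ hx
    · simp only [List.mem_singleton] at hx
      simp [hx]

lemma isCycleList_rotate_one {α : Type*} {R : α → α → Prop} {a : α} {t : List α}
    (h : IsCycleList R (a :: t)) : IsCycleList R (t ++ [a]) := by
  obtain ⟨hnd, hch⟩ := h
  cases t with
  | nil => exact ⟨hnd, hch⟩
  | cons b t' =>
    refine ⟨(List.perm_append_singleton a (b :: t')).symm.nodup hnd, ?_⟩
    · rcases List.chain_cons.1 hch with ⟨hab, hbt⟩
      show List.Chain R b ((t' ++ [a]) ++ [b])
      have heq : (t' ++ [a]) ++ [b] = t' ++ a :: [b] := by simp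
      rw [heq]
      exact List.isChain_cons_split.2 ⟨hbt, List.isChain_pair.2 hab⟩

lemma isCycleList_rotate {α : Type*} {R : α → α → Prop} {l : List α}
    (h : IsCycleList R l) (n : ℕ) : IsCycleList R (l.rotate n) := by
  induction n with
  | zero => simpa using h
  | succ n ih =>
    have heq : (l.rotate n).rotate 1 = l.rotate (n + 1) := List.rotate_rotate l n 1
    rw [← heq]
    cases hrn : l.rotate n with
    | nil => rw [hrn] at ih; exact ih.elim
    | cons a t =>
      rw [hrn] at ih
      have : (a :: t).rotate 1 = t ++ [a] := by
        rw [List.rotate_cons_succ, List.rotate_zero]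
      rw [this]
      exact isCycleList_rotate_one ih

lemma isCycleList_of_rotated {α : Type*} {R : α → α → Prop} {l l' : List α}
    (h : IsCycleList R l) (hr : l ~r l') : IsCycleList R l' := by
  obtain ⟨n, rfl⟩ := hr
  exact isCycleList_rotate h n

lemma exists_rotated_cons {α : Type*} {l : List α} {x : α} (hx : x ∈ l) :
    ∃ t, l ~r (x :: t) := by
  obtain ⟨s, t, rfl⟩ := List.append_of_mem hx
  exact ⟨t ++ s, by simpa using List.isRotated_append (l := s) (l' := x :: t)⟩

lemma chain_unique {α : Type*} {R : α → α → Prop} :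
    ∀ (t1 : List α) {t2 : List α} {x z : α},
      (∀ a ∈ x :: t1, ∀ b c, R a b → R a c → b = c) →
      z ∉ t1 → z ∉ t2 →
      List.Chain R x (t1 ++ [z]) → List.Chain R x (t2 ++ [z]) → t1 = t2
  | [], t2, x, z, det, _, hz2, h1, h2 => by
    cases t2 with
    | nil => rfl
    | cons c t2' =>
      have hxz : R x z := List.isChain_pair.1 h1
      have hxc : R x c := (List.chain_cons.1 h2).1
      have : z = c := det x (List.mem_cons_self) z c hxz hxc
      exact absurd (this ▸ List.mem_cons_self (a := c) (l := t2')) (this ▸ hz2)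
  | b :: t1', t2, x, z, det, hz1, hz2, h1, h2 => by
    rcases List.chain_cons.1 h1 with ⟨hxb, h1'⟩
    cases t2 with
    | nil =>
      have hxz : R x z := List.isChain_pair.1 h2
      have hbz : b = z := det x (List.mem_cons_self) b z hxb hxz
      exact absurd (hbz ▸ List.mem_cons_self (a := b) (l := t1')) hz1
    | cons c t2' =>
      rcases List.chain_cons.1 h2 with ⟨hxc, h2'⟩
      have hbc : b = c := det x (List.mem_cons_self) b c hxb hxc
      subst hbc
      have hz1' : z ∉ t1' := fun h => hz1 (List.mem_cons_of_mem _ h)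
      have hz2' : z ∉ t2' := fun h => hz2 (List.mem_cons_of_mem _ h)
      rw [chain_unique t1' (fun a ha => det a (List.mem_cons_of_mem _ ha)) hz1' hz2' h1' h2']

variable {V : Type*} [DecidableEq V] {G : SimpleGraph V} {m : Finset (Finset V × Finset V)}

lemma det_on_cycle (hm : IsMatching (GraphArc G) m) {l : List (Finset V)}
    (hl : IsCycleList (MStep (GraphArc G) m) l) {x : Finset V} (hx : x ∈ l)
    {b c : Finset V} (hb : MStep (GraphArc G) m x b) (hc : MStep (GraphArc G) m x c) :
    b = c := by
  obtain ⟨y, hy, hyx⟩ := cycle_pred hl hx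
  rcases hyx with ⟨hA, _⟩ | ⟨hA, hmem⟩
  · -- x is a vertex-face: x.card = 1
    have hx1 : x.card = 1 := graphArc_card_snd hA
    rcases hb with ⟨hAb, _⟩ | ⟨hAb, hbm⟩
    · have := graphArc_card_fst hAb; omega
    rcases hc with ⟨hAc, _⟩ | ⟨hAc, hcm⟩
    · have := graphArc_card_fst hAc; omega
    · have : (b, x) = (c, x) := IsMatching.snd_inj hm hbm hcm rfl
      exact (Prod.ext_iff.1 this).1
  · -- (x, y) ∈ m : x is a matched edge-face
    have hx2 : x.card = 2 := graphArc_card_fst (hm.1 _ hmem)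
    rcases hb with ⟨hAb, hbnm⟩ | ⟨hAb, hbm⟩
    swap
    · have := graphArc_card_snd hAb; omega
    rcases hc with ⟨hAc, hcnm⟩ | ⟨hAc, hcm⟩
    swap
    · have := graphArc_card_snd hAc; omega
    -- both forward
    obtain ⟨β, hβx, hbeq⟩ := graphArc_snd_sub hAb
    obtain ⟨γ, hγx, hceq⟩ := graphArc_snd_sub hAc
    obtain ⟨η, hηx', hyeq'⟩ := graphArc_snd_sub (hm.1 _ hmem)
    have hηx : η ∈ x := hηx'
    have hyeq : y = {η} := hyeq'
    have hbny : b ≠ y := fun h => hbnm (h ▸ hmem)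
    have hcny : c ≠ y := fun h => hcnm (h ▸ hmem)
    have hβη : β ≠ η := by
      intro h; exact hbny (by rw [hbeq, hyeq, h])
    have hγη : γ ≠ η := by
      intro h; exact hcny (by rw [hceq, hyeq, h])
    obtain ⟨s, t, hst, hxst⟩ := Finset.card_eq_two.1 hx2
    subst hxst
    simp only [Finset.mem_insert, Finset.mem_singleton] at hβx hγx hηx
    rw [hbeq, hceq]
    rcases hβx with rfl | rfl <;> rcases hγx with rfl | rfl <;>
      rcases hηx with rfl | rfl <;> simp_all

lemma cycles_rotated (hm : IsMatching (GraphArc G) m) {l1 l2 : List (Finset V)}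
    (h1 : l1 ∈ cyclesOf (GraphArc G) m) (h2 : l2 ∈ cyclesOf (GraphArc G) m)
    {x : Finset V} (hx1 : x ∈ l1) (hx2 : x ∈ l2) : l1 ~r l2 := by
  obtain ⟨t1, hr1⟩ := exists_rotated_cons hx1
  obtain ⟨t2, hr2⟩ := exists_rotated_cons hx2
  have hc1 : IsCycleList (MStep (GraphArc G) m) (x :: t1) := isCycleList_of_rotated h1 hr1
  have hc2 : IsCycleList (MStep (GraphArc G) m) (x :: t2) := isCycleList_of_rotated h2 hr2
  have hnd1 : x ∉ t1 := (List.nodup_cons.1 hc1.1).1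
  have hnd2 : x ∉ t2 := (List.nodup_cons.1 hc2.1).1
  have det : ∀ a ∈ x :: t1, ∀ b c, MStep (GraphArc G) m a b → MStep (GraphArc G) m a c →
      b = c := fun a ha b c hb hc => det_on_cycle hm hc1 ha hb hc
  have heq : t1 = t2 := chain_unique t1 det hnd1 hnd2 hc1.2 hc2.2
  exact hr1.trans (heq ▸ hr2.symm)

lemma not_mem_cycle_erase (hm : IsMatching (GraphArc G) m) {e : Finset V × Finset V}
    (he : e ∈ m) {l : List (Finset V)} (hl : IsCycleList (MStep (GraphArc G) (m.erase e)) l) :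
    e.1 ∉ l := by
  intro hmem
  obtain ⟨y, _, hyx⟩ := cycle_pred hl hmem
  rcases hyx with ⟨hA, _⟩ | ⟨hA, hym⟩
  · have h1 : e.1.card = 1 := graphArc_card_snd hA
    have h2 : e.1.card = 2 := graphArc_card_fst (hm.1 e he)
    omega
  · have hne : (e.1, y) ≠ e := Finset.ne_of_mem_erase hym
    exact hne (IsMatching.fst_inj hm (Finset.mem_of_mem_erase hym) he rfl)

lemma cyclesOf_erase (hm : IsMatching (GraphArc G) m) {e : Finset V × Finset V} (he : e ∈ m) :
    cyclesOf (GraphArc G) (m.erase e) = {l | l ∈ cyclesOf (GraphArc G) m ∧ e.1 ∉ l} := by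
  ext l
  constructor
  · intro hl
    have hnot : e.1 ∉ l := not_mem_cycle_erase hm he hl
    refine ⟨cycle_imp hl (fun a b ha hb hab => ?_), hnot⟩
    rcases hab with ⟨hA, hnm⟩ | ⟨hA, hmm⟩
    · left
      refine ⟨hA, fun hin => ?_⟩
      have heq : (a, b) = e := by
        by_contra hne
        exact hnm (Finset.mem_erase.2 ⟨hne, hin⟩)
      exact hnot (by rw [← heq]; exact ha)
    · exact Or.inr ⟨hA, Finset.mem_of_mem_erase hmm⟩
  · rintro ⟨hl, hnot⟩
    refine cycle_imp hl (fun a b ha hb hab => ?_)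
    rcases hab with ⟨hA, hnm⟩ | ⟨hA, hmm⟩
    · exact Or.inl ⟨hA, fun hin => hnm (Finset.mem_of_mem_erase hin)⟩
    · refine Or.inr ⟨hA, Finset.mem_erase.2 ⟨fun hbe => ?_, hmm⟩⟩
      exact hnot (by rw [← hbe]; exact hb)

variable [Fintype V]

lemma cyclesOf_finite (A : Finset V → Finset V → Prop) (n : Finset (Finset V × Finset V)) :
    (cyclesOf A n).Finite := by
  refine Set.Finite.subset (List.finite_length_le (Finset V) (Fintype.card (Finset V))) ?_
  intro l hl
  simp only [Set.mem_setOf_eq]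
  cases l with
  | nil => exact hl.elim
  | cons a t => exact hl.1.length_le_card

lemma numCycles_erase_iff (hm : IsMatching (GraphArc G) m) {e : Finset V × Finset V}
    (he : e ∈ m) :
    numCycles (GraphArc G) (m.erase e) + 1 = numCycles (GraphArc G) m ↔
      ∃ l ∈ cyclesOf (GraphArc G) m, e.1 ∈ l := by
  constructor
  · intro hnum
    by_contra hno
    push_neg at hno
    have hset : cyclesOf (GraphArc G) (m.erase e) = cyclesOf (GraphArc G) m := by
      rw [cyclesOf_erase hm he]
      ext l
      exact ⟨fun h => h.1, fun h => ⟨h, hno l h⟩⟩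
    rw [numCycles, numCycles, hset] at hnum
    omega
  · rintro ⟨l0, hl0, hmem⟩
    have hfin : (Quotient.mk (List.IsRotated.setoid (Finset V)) ''
        cyclesOf (GraphArc G) (m.erase e)).Finite :=
      (cyclesOf_finite _ _).image _
    have hnot : Quotient.mk (List.IsRotated.setoid (Finset V)) l0 ∉
        Quotient.mk (List.IsRotated.setoid (Finset V)) '' cyclesOf (GraphArc G) (m.erase e) := by
      rintro ⟨l, hl, heq⟩
      have hrel : l ~r l0 := Quotient.exact heq
      have : e.1 ∈ l := hrel.mem_iff.2 hmem
      rw [cyclesOf_erase hm he] at hl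
      exact hl.2 this
    have hkey : Quotient.mk (List.IsRotated.setoid (Finset V)) '' cyclesOf (GraphArc G) m =
        insert (Quotient.mk (List.IsRotated.setoid (Finset V)) l0)
          (Quotient.mk (List.IsRotated.setoid (Finset V)) '' cyclesOf (GraphArc G) (m.erase e)) := by
      ext q
      constructor
      · rintro ⟨l, hl, rfl⟩
        by_cases hc : e.1 ∈ l
        · exact Or.inl (Quotient.sound (cycles_rotated hm hl hl0 hc hmem))
        · exact Or.inr ⟨l, by rw [cyclesOf_erase hm he]; exact ⟨hl, hc⟩, rfl⟩
      · rintro (rfl | ⟨l, hl, rfl⟩)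
        · exact ⟨l0, hl0, rfl⟩
        · rw [cyclesOf_erase hm he] at hl
          exact ⟨l, hl.1, rfl⟩
    rw [numCycles, numCycles, hkey, Set.ncard_insert_of_notMem hnot hfin]

lemma onCycle_erase_iff (hm : IsMatching (GraphArc G) m) {e : Finset V × Finset V}
    (he : e ∈ m) (f : Finset V × Finset V) :
    (∃ l ∈ cyclesOf (GraphArc G) (m.erase e), f.1 ∈ l) ↔
      ∃ l ∈ cyclesOf (GraphArc G) m, f.1 ∈ l ∧ e.1 ∉ l := by
  rw [cyclesOf_erase hm he]
  constructor
  · rintro ⟨l, hl, h⟩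
    exact ⟨l, hl.1, h, hl.2⟩
  · rintro ⟨l, hl, h1, h2⟩
    exact ⟨l, ⟨hl, h2⟩, h1⟩

lemma sym_dir (hm : IsMatching (GraphArc G) m) {e f : Finset V × Finset V}
    (he : e ∈ m) (hf : f ∈ m) (hef : e ≠ f)
    (h1 : 2 ≤ m.card ∧ numCycles (GraphArc G) (m.erase e) + 1 = numCycles (GraphArc G) m)
    (h2 : 2 ≤ (m.erase e).card ∧
      numCycles (GraphArc G) ((m.erase e).erase f) + 1 = numCycles (GraphArc G) (m.erase e)) :
    (2 ≤ m.card ∧ numCycles (GraphArc G) (m.erase f) + 1 = numCycles (GraphArc G) m) ∧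
      (2 ≤ (m.erase f).card ∧
        numCycles (GraphArc G) ((m.erase f).erase e) + 1 = numCycles (GraphArc G) (m.erase f)) := by
  obtain ⟨hc2, hne⟩ := h1
  obtain ⟨hc2', hnef⟩ := h2
  have hfe : f ∈ m.erase e := Finset.mem_erase.2 ⟨hef.symm, hf⟩
  have hef' : e ∈ m.erase f := Finset.mem_erase.2 ⟨hef, he⟩
  have hme : IsMatching (GraphArc G) (m.erase e) := IsMatching.erase hm e
  have hmf : IsMatching (GraphArc G) (m.erase f) := IsMatching.erase hm f
  obtain ⟨le, hle, hle1⟩ := (numCycles_erase_iff hm he).1 hne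
  obtain ⟨lf, hlf, hlf1, hlf2⟩ :=
    (onCycle_erase_iff hm he f).1 ((numCycles_erase_iff hme hfe).1 hnef)
  -- f.1 is not on the cycle le
  have hfle : f.1 ∉ le := by
    intro h
    have hrot : le ~r lf := cycles_rotated hm hle hlf h hlf1
    exact hlf2 (hrot.mem_iff.1 hle1)
  refine ⟨⟨hc2, (numCycles_erase_iff hm hf).2 ⟨lf, hlf, hlf1⟩⟩, ?_, ?_⟩
  · rw [Finset.card_erase_of_mem hf]
    rw [Finset.card_erase_of_mem he] at hc2'
    exact hc2'
  · exact (numCycles_erase_iff hmf hef').2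
      ((onCycle_erase_iff hm hf e).2 ⟨le, hle, hle1, hfle⟩)


open scoped Classical in
noncomputable def gmap {α : Type*} [DecidableEq α] (A : α → α → Prop)
    (m : Finset (α × α)) : Finset (α × α) →₀ ZMod 2 :=
  (m.filter (fun e => 2 ≤ m.card ∧ numCycles A (m.erase e) + 1 = numCycles A m)).sum
    (fun e => Finsupp.single (m.erase e) (1 : ZMod 2))

lemma bdryD_eq {α : Type*} [DecidableEq α] (A : α → α → Prop)
    (x : Finset (α × α) →₀ ZMod 2) :
    bdryD A x = x.sum fun m c => c • gmap A m := rfl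

lemma bdryD_add {α : Type*} [DecidableEq α] (A : α → α → Prop)
    (x y : Finset (α × α) →₀ ZMod 2) :
    bdryD A (x + y) = bdryD A x + bdryD A y := by
  simp only [bdryD_eq]
  exact Finsupp.sum_add_index' (fun m => zero_smul _ _) (fun m b c => add_smul b c _)

noncomputable def bdryDHom {α : Type*} [DecidableEq α] (A : α → α → Prop) :
    (Finset (α × α) →₀ ZMod 2) →+ (Finset (α × α) →₀ ZMod 2) :=
  AddMonoidHom.mk' (bdryD A) (bdryD_add A)

lemma bdryD_sum {α : Type*} [DecidableEq α] (A : α → α → Prop) {β : Type*}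
    (s : Finset β) (f : β → (Finset (α × α) →₀ ZMod 2)) :
    bdryD A (∑ b ∈ s, f b) = ∑ b ∈ s, bdryD A (f b) :=
  map_sum (bdryDHom A) f s

lemma bdryD_single {α : Type*} [DecidableEq α] (A : α → α → Prop) (n : Finset (α × α)) :
    bdryD A (Finsupp.single n 1) = gmap A n := by
  rw [bdryD_eq]
  rw [Finsupp.sum_single_index (by rw [zero_smul])]
  rw [one_smul]

variable {V : Type*} [Fintype V] [DecidableEq V] {G : SimpleGraph V}

open Finset in
lemma bdryD_gmap_zero {m : Finset (Finset V × Finset V)}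
    (hm : IsMatching (GraphArc G) m) :
    bdryD (GraphArc G) (gmap (GraphArc G) m) = 0 := by
  classical
  set A := GraphArc G with hA
  set P₁ : (Finset V × Finset V) → Prop :=
    fun e => 2 ≤ m.card ∧ numCycles A (m.erase e) + 1 = numCycles A m with hP₁
  set P₂ : (Finset V × Finset V) → (Finset V × Finset V) → Prop :=
    fun e f => 2 ≤ (m.erase e).card ∧
      numCycles A ((m.erase e).erase f) + 1 = numCycles A (m.erase e) with hP₂
  have step1 : bdryD A (gmap A m) =
      ∑ e ∈ m.filter P₁, ∑ f ∈ (m.erase e).filter (P₂ e),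
        Finsupp.single ((m.erase e).erase f) (1 : ZMod 2) := by
    rw [gmap, bdryD_sum]
    exact Finset.sum_congr rfl fun e _ => by rw [bdryD_single, gmap]
  rw [step1]
  have step2 : ∀ e, ∑ f ∈ (m.erase e).filter (P₂ e),
      Finsupp.single ((m.erase e).erase f) (1 : ZMod 2) =
      ∑ f ∈ m, if f ≠ e ∧ P₂ e f then Finsupp.single ((m.erase e).erase f) (1 : ZMod 2)
        else 0 := by
    intro e
    rw [Finset.sum_filter]
    have h1 : ∑ f ∈ m.erase e, (if P₂ e f then
        Finsupp.single ((m.erase e).erase f) (1 : ZMod 2) else 0) =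
        ∑ f ∈ m.erase e, (if f ≠ e ∧ P₂ e f then
          Finsupp.single ((m.erase e).erase f) (1 : ZMod 2) else 0) := by
      refine Finset.sum_congr rfl fun f hf => ?_
      have hne : f ≠ e := (Finset.mem_erase.1 hf).1
      by_cases h2 : P₂ e f
      · rw [if_pos h2, if_pos ⟨hne, h2⟩]
      · rw [if_neg h2, if_neg (fun hc => h2 hc.2)]
    rw [h1]
    exact Finset.sum_erase _ (by rw [if_neg (fun hc => hc.1 rfl)])
  rw [Finset.sum_filter]
  have step3 : ∀ e ∈ m, (if P₁ e then ∑ f ∈ (m.erase e).filter (P₂ e),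
      Finsupp.single ((m.erase e).erase f) (1 : ZMod 2) else 0) =
      ∑ f ∈ m, if P₁ e ∧ f ≠ e ∧ P₂ e f then
        Finsupp.single ((m.erase e).erase f) (1 : ZMod 2) else 0 := by
    intro e _
    by_cases h : P₁ e
    · rw [if_pos h, step2 e]
      exact Finset.sum_congr rfl fun f _ => by
        by_cases h2 : f ≠ e ∧ P₂ e f
        · rw [if_pos h2, if_pos ⟨h, h2⟩]
        · rw [if_neg h2, if_neg (fun hc => h2 ⟨hc.2.1, hc.2.2⟩)]
    · rw [if_neg h]
      exact ((Finset.sum_congr rfl fun f _ =>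
        (if_neg (fun hc => h hc.1))).trans Finset.sum_const_zero).symm
  rw [Finset.sum_congr rfl step3, ← Finset.sum_product']
  refine Finset.sum_involution (fun p _ => (p.2, p.1)) ?_ ?_ ?_ ?_
  · -- terms cancel in pairs
    intro p hp
    rw [Finset.mem_product] at hp
    by_cases hC : P₁ p.1 ∧ p.2 ≠ p.1 ∧ P₂ p.1 p.2
    · have hsym := sym_dir hm hp.1 hp.2 (Ne.symm hC.2.1) hC.1 hC.2.2
      have hC' : P₁ p.2 ∧ p.1 ≠ p.2 ∧ P₂ p.2 p.1 := ⟨hsym.1, hC.2.1.symm, hsym.2⟩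
      rw [if_pos hC, if_pos hC', Finset.erase_right_comm (a := p.2) (b := p.1)]
      rw [← Finsupp.single_add]
      have h11 : (1 : ZMod 2) + 1 = 0 := by decide
      rw [h11, Finsupp.single_zero]
    · have hC' : ¬(P₁ p.2 ∧ p.1 ≠ p.2 ∧ P₂ p.2 p.1) := by
        intro h
        have hsym := sym_dir hm hp.2 hp.1 (Ne.symm h.2.1) h.1 h.2.2
        exact hC ⟨hsym.1, h.2.1.symm, hsym.2⟩
      rw [if_neg hC, if_neg hC', add_zero]
  · intro p _ hne heq
    have h1 : p.2 = p.1 := congrArg Prod.fst heq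
    apply hne
    have : ¬(P₁ p.1 ∧ p.2 ≠ p.1 ∧ P₂ p.1 p.2) := fun h => h.2.1 h1
    rw [if_neg this]
  · intro p hp
    rw [Finset.mem_product] at hp ⊢
    exact ⟨hp.2, hp.1⟩
  · intro p _
    rfl

end BdryAux


/-- for a finite simple graph `G`, `∂_d ∘ ∂_d = 0` on the 𝔽₂-vector
space `Ĉ(G)` with basis the nonempty matchings on the face poset `F(G)`; that is, the
diagonal map `∂_d` is a differential on `Ĉ(G)`. -/
theorem bdryD_squared_zero {V : Type*} [Fintype V] [DecidableEq V]
    (G : SimpleGraph V)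
    (x : Finset (Finset V × Finset V) →₀ ZMod 2)
    (hx : ∀ m ∈ x.support, IsMatching (GraphArc G) m ∧ m ≠ ∅) :
    bdryD (GraphArc G) (bdryD (GraphArc G) x) = 0 := by
  classical
  have hone : ∀ c : ZMod 2, c ≠ 0 → c = 1 := by decide
  have h1 : bdryD (GraphArc G) x = ∑ m ∈ x.support, BdryAux.gmap (GraphArc G) m := by
    rw [BdryAux.bdryD_eq, Finsupp.sum]
    refine Finset.sum_congr rfl fun m hm => ?_
    rw [hone (x m) (Finsupp.mem_support_iff.1 hm), one_smul]
  rw [h1, BdryAux.bdryD_sum]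
  refine Finset.sum_eq_zero fun m hm => ?_
  exact BdryAux.bdryD_gmap_zero (hx m hm).1
end
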